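/- arXiv:0901.1891 — 7 statements merged into one kernel-verified Lean document; each statement's English description precedes it below -/
import Mathlib

section
/- Let H be a complex Hilbert space and T, S : H → H bounded linear operators. Set R_T = (1 + T*T)⁻¹, R_{T*} = (1 + TT*)⁻¹ and similarly for S, and let d(T,S) = max{‖R_T − R_S‖, ‖R_{T*} − R_{S*}‖, ‖T R_T − S R_S‖}. Then, with P_{G(T)} and P_{G(S)} the orthogonal projections of H ⊕ H onto the graphs of T and S, one has d(T,S) ≤ ‖P_{G(T)} − P_{G(S)}‖ ≤ 4·d(T,S). -/
/-- The graph of a bounded operator `T : H → H`, viewed as a submodule of the Hilbert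
space `H ⊕ H` (the `ℓ²`-direct sum `WithLp 2 (H × H)`). -/
noncomputable def boundedGraph {H : Type*} [NormedAddCommGroup H] [InnerProductSpace ℂ H]
    (T : H →L[ℂ] H) : Submodule ℂ (WithLp 2 (H × H)) :=
  (LinearMap.graph (T : H →ₗ[ℂ] H)).comap (WithLp.linearEquiv 2 ℂ (H × H)).toLinearMap

/-- `P` is the orthogonal projection of the Hilbert space `E` onto the subspace `G`:
it is the (unique) selfadjoint idempotent bounded operator with range `G`. -/
def IsOrthogonalProjectionOnto {E : Type*} [NormedAddCommGroup E] [InnerProductSpace ℂ E]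
    [CompleteSpace E] (P : E →L[ℂ] E) (G : Submodule ℂ E) : Prop :=
  IsSelfAdjoint P ∧ IsIdempotentElem P ∧ LinearMap.range (P : E →ₗ[ℂ] E) = G


set_option linter.unusedSectionVars false
set_option maxHeartbeats 1000000
open ContinuousLinearMap

section Aux
open ContinuousLinearMap
variable {H : Type*} [NormedAddCommGroup H] [InnerProductSpace ℂ H] [CompleteSpace H]

noncomputable def blk (A B C D : H →L[ℂ] H) :
    WithLp 2 (H × H) →L[ℂ] WithLp 2 (H × H) :=
  (WithLp.prodContinuousLinearEquiv 2 ℂ H H).symm.toContinuousLinearMap ∘L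
    (((A ∘L fst ℂ H H + B ∘L snd ℂ H H)).prod (C ∘L fst ℂ H H + D ∘L snd ℂ H H)) ∘L
    (WithLp.prodContinuousLinearEquiv 2 ℂ H H).toContinuousLinearMap

theorem blk_fst (A B C D : H →L[ℂ] H) (z : WithLp 2 (H × H)) :
    (blk A B C D z).fst = A z.fst + B z.snd := rfl
theorem blk_snd (A B C D : H →L[ℂ] H) (z : WithLp 2 (H × H)) :
    (blk A B C D z).snd = C z.fst + D z.snd := rfl

theorem wlp_ext {z w : WithLp 2 (H × H)} (h1 : z.fst = w.fst) (h2 : z.snd = w.snd) : z = w :=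
  WithLp.ofLp_injective 2 (Prod.ext h1 h2)

theorem blk_comp (A B C D A' B' C' D' : H →L[ℂ] H) :
    blk A B C D ∘L blk A' B' C' D' =
      blk (A*A'+B*C') (A*B'+B*D') (C*A'+D*C') (C*B'+D*D') := by
  ext z
  · exact wlp_ext (by simp [blk_fst, blk_snd, mul_apply]; abel)
      (by simp [blk_fst, blk_snd, mul_apply]; abel)

theorem blk_sub (A B C D A' B' C' D' : H →L[ℂ] H) :
    blk A B C D - blk A' B' C' D' = blk (A-A') (B-B') (C-C') (D-D') := by
  ext z
  · exact wlp_ext (by simp [blk_fst, blk_snd]; abel) (by simp [blk_fst, blk_snd]; abel)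



theorem wlp_fst_le (z : WithLp 2 (H × H)) : ‖z.fst‖ ≤ ‖z‖ := by
  have h := WithLp.prod_norm_sq_eq_of_L2 z
  nlinarith [norm_nonneg z, norm_nonneg z.fst, norm_nonneg z.snd]
theorem wlp_snd_le (z : WithLp 2 (H × H)) : ‖z.snd‖ ≤ ‖z‖ := by
  have h := WithLp.prod_norm_sq_eq_of_L2 z
  nlinarith [norm_nonneg z, norm_nonneg z.fst, norm_nonneg z.snd]
theorem wlp_le_add (z : WithLp 2 (H × H)) : ‖z‖ ≤ ‖z.fst‖ + ‖z.snd‖ := by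
  have h := WithLp.prod_norm_sq_eq_of_L2 z
  nlinarith [norm_nonneg z, norm_nonneg z.fst, norm_nonneg z.snd, mul_nonneg (norm_nonneg z.fst) (norm_nonneg z.snd)]

theorem norm_blk_le (A B C D : H →L[ℂ] H) : ‖blk A B C D‖ ≤ ‖A‖ + ‖B‖ + ‖C‖ + ‖D‖ := by
  refine opNorm_le_bound _ (by positivity) fun z => ?_
  have h1 := wlp_le_add (blk A B C D z)
  rw [blk_fst, blk_snd] at h1
  have hA := (A.le_opNorm z.fst).trans (mul_le_mul_of_nonneg_left (wlp_fst_le z) (norm_nonneg A))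
  have hB := (B.le_opNorm z.snd).trans (mul_le_mul_of_nonneg_left (wlp_snd_le z) (norm_nonneg B))
  have hC := (C.le_opNorm z.fst).trans (mul_le_mul_of_nonneg_left (wlp_fst_le z) (norm_nonneg C))
  have hD := (D.le_opNorm z.snd).trans (mul_le_mul_of_nonneg_left (wlp_snd_le z) (norm_nonneg D))
  have h2 := norm_add_le (A z.fst) (B z.snd)
  have h3 := norm_add_le (C z.fst) (D z.snd)
  nlinarith

theorem norm_inj1 (x : H) : ‖((WithLp.equiv 2 (H × H)).symm (x, 0) : WithLp 2 (H × H))‖ = ‖x‖ := by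
  have h : ‖((WithLp.equiv 2 (H × H)).symm (x, 0) : WithLp 2 (H × H))‖ ^ 2 = ‖x‖ ^ 2 + ‖(0 : H)‖ ^ 2 :=
    WithLp.prod_norm_sq_eq_of_L2 _
  rw [norm_zero] at h
  nlinarith [norm_nonneg ((WithLp.equiv 2 (H × H)).symm (x, (0:H))), norm_nonneg x]
theorem norm_inj2 (y : H) : ‖((WithLp.equiv 2 (H × H)).symm (0, y) : WithLp 2 (H × H))‖ = ‖y‖ := by
  have h : ‖((WithLp.equiv 2 (H × H)).symm (0, y) : WithLp 2 (H × H))‖ ^ 2 = ‖(0 : H)‖ ^ 2 + ‖y‖ ^ 2 :=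
    WithLp.prod_norm_sq_eq_of_L2 _
  rw [norm_zero] at h
  nlinarith [norm_nonneg ((WithLp.equiv 2 (H × H)).symm ((0:H), y)), norm_nonneg y]

theorem norm_le_blk_A (A B C D : H →L[ℂ] H) : ‖A‖ ≤ ‖blk A B C D‖ := by
  refine opNorm_le_bound _ (norm_nonneg _) fun x => ?_
  have h1 : A x = (blk A B C D ((WithLp.equiv 2 (H × H)).symm (x, 0))).fst := by
    rw [blk_fst]; simp
  rw [h1]
  calc ‖(blk A B C D ((WithLp.equiv 2 (H × H)).symm (x, 0))).fst‖
      ≤ ‖blk A B C D ((WithLp.equiv 2 (H × H)).symm (x, 0))‖ := wlp_fst_le _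
    _ ≤ ‖blk A B C D‖ * ‖((WithLp.equiv 2 (H × H)).symm (x, 0) : WithLp 2 (H × H))‖ :=
        le_opNorm _ _
    _ = ‖blk A B C D‖ * ‖x‖ := by rw [norm_inj1]

theorem norm_le_blk_C (A B C D : H →L[ℂ] H) : ‖C‖ ≤ ‖blk A B C D‖ := by
  refine opNorm_le_bound _ (norm_nonneg _) fun x => ?_
  have h1 : C x = (blk A B C D ((WithLp.equiv 2 (H × H)).symm (x, 0))).snd := by
    rw [blk_snd]; simp
  rw [h1]
  calc ‖(blk A B C D ((WithLp.equiv 2 (H × H)).symm (x, 0))).snd‖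
      ≤ ‖blk A B C D ((WithLp.equiv 2 (H × H)).symm (x, 0))‖ := wlp_snd_le _
    _ ≤ ‖blk A B C D‖ * ‖((WithLp.equiv 2 (H × H)).symm (x, 0) : WithLp 2 (H × H))‖ :=
        le_opNorm _ _
    _ = ‖blk A B C D‖ * ‖x‖ := by rw [norm_inj1]

theorem norm_le_blk_D (A B C D : H →L[ℂ] H) : ‖D‖ ≤ ‖blk A B C D‖ := by
  refine opNorm_le_bound _ (norm_nonneg _) fun y => ?_
  have h1 : D y = (blk A B C D ((WithLp.equiv 2 (H × H)).symm (0, y))).snd := by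
    rw [blk_snd]; simp
  rw [h1]
  calc ‖(blk A B C D ((WithLp.equiv 2 (H × H)).symm (0, y))).snd‖
      ≤ ‖blk A B C D ((WithLp.equiv 2 (H × H)).symm (0, y))‖ := wlp_snd_le _
    _ ≤ ‖blk A B C D‖ * ‖((WithLp.equiv 2 (H × H)).symm (0, y) : WithLp 2 (H × H))‖ :=
        le_opNorm _ _
    _ = ‖blk A B C D‖ * ‖y‖ := by rw [norm_inj2]

theorem blk_selfAdjoint {A B C D : H →L[ℂ] H} (hA : IsSelfAdjoint A) (hD : IsSelfAdjoint D)
    (hBC : adjoint C = B) : IsSelfAdjoint (blk A B C D) := by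
  rw [isSelfAdjoint_iff']
  symm
  rw [eq_adjoint_iff]
  intro x y
  rw [isSelfAdjoint_iff'] at hA hD
  have hB : adjoint B = C := by rw [← hBC, adjoint_adjoint]
  calc inner ℂ (blk A B C D x) y
      = inner ℂ (A x.fst + B x.snd) y.fst + inner ℂ (C x.fst + D x.snd) y.snd := by
        rw [WithLp.prod_inner_apply, WithLp.ofLp_fst, WithLp.ofLp_fst, WithLp.ofLp_snd, WithLp.ofLp_snd, blk_fst, blk_snd]
    _ = inner ℂ x.fst (A y.fst) + inner ℂ x.snd (C y.fst)
        + (inner ℂ x.fst (B y.snd) + inner ℂ x.snd (D y.snd)) := by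
        have eA : (inner ℂ (A x.fst) y.fst : ℂ) = inner ℂ x.fst (A y.fst) := by
          nth_rewrite 1 [← hA]; exact adjoint_inner_left _ _ _
        have eB : (inner ℂ (B x.snd) y.fst : ℂ) = inner ℂ x.snd (C y.fst) := by
          nth_rewrite 1 [← hBC]; exact adjoint_inner_left _ _ _
        have eC : (inner ℂ (C x.fst) y.snd : ℂ) = inner ℂ x.fst (B y.snd) := by
          nth_rewrite 1 [← hB]; exact adjoint_inner_left _ _ _
        have eD : (inner ℂ (D x.snd) y.snd : ℂ) = inner ℂ x.snd (D y.snd) := by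
          nth_rewrite 1 [← hD]; exact adjoint_inner_left _ _ _
        rw [inner_add_left, inner_add_left, eA, eB, eC, eD]
    _ = inner ℂ x (blk A B C D y) := by
        rw [WithLp.prod_inner_apply, WithLp.ofLp_fst, WithLp.ofLp_fst, WithLp.ofLp_snd, WithLp.ofLp_snd, blk_fst, blk_snd, inner_add_right, inner_add_right]
        ring

theorem orthProj_unique {E : Type*} [NormedAddCommGroup E] [InnerProductSpace ℂ E]
    [CompleteSpace E] {P Q : E →L[ℂ] E} {G : Submodule ℂ E}
    (hP : IsOrthogonalProjectionOnto P G) (hQ : IsOrthogonalProjectionOnto Q G) : P = Q := by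
  obtain ⟨hP1, hP2, hP3⟩ := hP
  obtain ⟨hQ1, hQ2, hQ3⟩ := hQ
  have fixP : ∀ y ∈ G, P y = y := by
    intro y hy
    rw [← hP3] at hy
    obtain ⟨z, rfl⟩ := hy
    conv_rhs => rw [← hP2]
    rfl
  have fixQ : ∀ y ∈ G, Q y = y := by
    intro y hy
    rw [← hQ3] at hy
    obtain ⟨z, rfl⟩ := hy
    conv_rhs => rw [← hQ2]
    rfl
  ext x
  have hPGx : P x ∈ G := hP3 ▸ LinearMap.mem_range_self _ x
  have hQGx : Q x ∈ G := hQ3 ▸ LinearMap.mem_range_self _ x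
  have hu : P (P x - Q x) = P x - Q x := by
    rw [map_sub, fixP _ hPGx, fixP _ hQGx]
  have hu' : Q (P x - Q x) = P x - Q x := by
    rw [map_sub, fixQ _ hPGx, fixQ _ hQGx]
  rw [isSelfAdjoint_iff'] at hP1 hQ1
  have key : (inner ℂ (P x - Q x) (P x - Q x) : ℂ) = 0 := by
    rw [inner_sub_right]
    have e1 : (inner ℂ (P x - Q x) (P x) : ℂ) = inner ℂ (P x - Q x) x := by
      rw [← hP1, adjoint_inner_right, hP1, hu]
    have e2 : (inner ℂ (P x - Q x) (Q x) : ℂ) = inner ℂ (P x - Q x) x := by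
      rw [← hQ1, adjoint_inner_right, hQ1, hu']
    rw [e1, e2, sub_self]
  have := inner_self_eq_zero.mp key
  exact sub_eq_zero.mp this


section RingLemmas
variable {M : Type*} [Ring M] {t a r s : M}

theorem gp_htr (hra : r * (1 + a*t) = 1) (har : (1 + a*t) * r = 1) (hs : s * (1 + t*a) = 1) (hs' : (1 + t*a) * s = 1) : t * r = s * t := by
  calc t * r = (s * (1 + t*a)) * (t * r) := by rw [hs, one_mul]
    _ = s * (t * ((1 + a*t) * r)) := by noncomm_ring
    _ = s * t := by rw [har, mul_one]

theorem gp_hras (hra : r * (1 + a*t) = 1) (har : (1 + a*t) * r = 1) (hs : s * (1 + t*a) = 1) (hs' : (1 + t*a) * s = 1) : r * a = a * s := by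
  calc r * a = (r * a) * ((1 + t*a) * s) := by rw [hs', mul_one]
    _ = (r * (1 + a*t)) * (a * s) := by noncomm_ring
    _ = a * s := by rw [hra, one_mul]

theorem gp_E11 (hra : r * (1 + a*t) = 1) (har : (1 + a*t) * r = 1) (hs : s * (1 + t*a) = 1) (hs' : (1 + t*a) * s = 1) : r*r + (r*a)*(t*r) = r := by
  calc r*r + (r*a)*(t*r) = r * ((1 + a*t) * r) := by noncomm_ring
    _ = r := by rw [har, mul_one]

theorem gp_E12 (hra : r * (1 + a*t) = 1) (har : (1 + a*t) * r = 1) (hs : s * (1 + t*a) = 1) (hs' : (1 + t*a) * s = 1) : r*(r*a) + (r*a)*(1-s) = r*a := by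
  have h := gp_hras hra har hs hs'
  calc r*(r*a) + (r*a)*(1-s) = r*(r*a) + r*a - r*(a*s) := by noncomm_ring
    _ = r*(r*a) + r*a - r*(r*a) := by rw [← h]
    _ = r*a := by noncomm_ring

theorem gp_E21 (hra : r * (1 + a*t) = 1) (har : (1 + a*t) * r = 1) (hs : s * (1 + t*a) = 1) (hs' : (1 + t*a) * s = 1) : (t*r)*r + (1-s)*(t*r) = t*r := by
  have h := gp_htr hra har hs hs'
  calc (t*r)*r + (1-s)*(t*r) = t*r*r + t*r - (s*t)*r := by noncomm_ring
    _ = t*r*r + t*r - (t*r)*r := by rw [← h]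
    _ = t*r := by noncomm_ring

theorem gp_E22 (hra : r * (1 + a*t) = 1) (har : (1 + a*t) * r = 1) (hs : s * (1 + t*a) = 1) (hs' : (1 + t*a) * s = 1) : (t*r)*(r*a) + (1-s)*(1-s) = 1-s := by
  have h1 := gp_htr hra har hs hs'
  have h2 := gp_hras hra har hs hs'
  calc (t*r)*(r*a) + (1-s)*(1-s)
      = (t*r)*(r*a) + 1 - 2*s + s*s := by noncomm_ring
    _ = (s*t)*(r*a) + 1 - 2*s + s*s := by rw [← h1]
    _ = s*(t*(r*a)) + 1 - 2*s + s*s := by noncomm_ring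
    _ = s*(t*(a*s)) + 1 - 2*s + s*s := by rw [← h2]
    _ = s*((1 + t*a)*s) + 1 - 2*s := by noncomm_ring
    _ = s + 1 - 2*s := by rw [hs', mul_one]
    _ = 1-s := by noncomm_ring

theorem gp_hD (hra : r * (1 + a*t) = 1) (har : (1 + a*t) * r = 1) (hs : s * (1 + t*a) = 1) (hs' : (1 + t*a) * s = 1) : t*(r*a) = 1 - s := by
  have h2 := gp_hras hra har hs hs'
  calc t*(r*a) = t*(a*s) := by rw [← h2]
    _ = (1+t*a)*s - s := by noncomm_ring
    _ = 1 - s := by rw [hs']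

theorem gp_hfix (hra : r * (1 + a*t) = 1) (har : (1 + a*t) * r = 1) (hs : s * (1 + t*a) = 1) (hs' : (1 + t*a) * s = 1) : r + (r*a)*t = 1 := by
  calc r + (r*a)*t = r * (1 + a*t) := by noncomm_ring
    _ = 1 := hra

theorem gp_hfix2 (hra : r * (1 + a*t) = 1) (har : (1 + a*t) * r = 1) (hs : s * (1 + t*a) = 1) (hs' : (1 + t*a) * s = 1) : t*r + (1-s)*t = t := by
  have h1 := gp_htr hra har hs hs'
  calc t*r + (1-s)*t = t*r + t - s*t := by noncomm_ring
    _ = t*r + t - t*r := by rw [← h1]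
    _ = t := by noncomm_ring

end RingLemmas


variable {H : Type*} [NormedAddCommGroup H] [InnerProductSpace ℂ H] [CompleteSpace H]

theorem mem_boundedGraph {T : H →L[ℂ] H} {z : WithLp 2 (H × H)} :
    z ∈ boundedGraph T ↔ z.snd = T z.fst := by
  simp [boundedGraph, LinearMap.mem_graph_iff]

theorem isUnit_one_add_adj_mul (T : H →L[ℂ] H) : IsUnit (1 + adjoint T * T) := by
  have : (0:H→L[ℂ]H) ≤ adjoint T * T := by
    rw [← star_eq_adjoint]; exact star_mul_self_nonneg T
  exact CStarAlgebra.isUnit_of_le 1 (le_add_of_nonneg_right this) isStrictlyPositive_one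

theorem isUnit_one_add_mul_adj (T : H →L[ℂ] H) : IsUnit (1 + T * adjoint T) := by
  have : (0:H→L[ℂ]H) ≤ T * adjoint T := by
    rw [← star_eq_adjoint]; exact mul_star_self_nonneg T
  exact CStarAlgebra.isUnit_of_le 1 (le_add_of_nonneg_right this) isStrictlyPositive_one

theorem star_rT (T : H →L[ℂ] H) :
    star (Ring.inverse (1 + adjoint T * T)) = Ring.inverse (1 + adjoint T * T) := by
  rw [← Ring.inverse_star]
  congr 1
  simp [← star_eq_adjoint, star_add, star_mul, star_star]

theorem star_sT (T : H →L[ℂ] H) :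
    star (Ring.inverse (1 + T * adjoint T)) = Ring.inverse (1 + T * adjoint T) := by
  rw [← Ring.inverse_star]
  congr 1
  simp [← star_eq_adjoint, star_add, star_mul, star_star]


noncomputable def grP (T : H →L[ℂ] H) : WithLp 2 (H × H) →L[ℂ] WithLp 2 (H × H) :=
  blk (Ring.inverse (1 + adjoint T * T)) (Ring.inverse (1 + adjoint T * T) * adjoint T)
    (T * Ring.inverse (1 + adjoint T * T)) (1 - Ring.inverse (1 + T * adjoint T))

theorem grP_isOrthProj (T : H →L[ℂ] H) :
    IsOrthogonalProjectionOnto (grP T) (boundedGraph T) := by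
  set a := adjoint T with ha
  set r := Ring.inverse (1 + a * T) with hr
  set s := Ring.inverse (1 + T * a) with hsdef
  have hra : r * (1 + a*T) = 1 := Ring.inverse_mul_cancel _ (isUnit_one_add_adj_mul T)
  have har : (1 + a*T) * r = 1 := Ring.mul_inverse_cancel _ (isUnit_one_add_adj_mul T)
  have hs : s * (1 + T*a) = 1 := Ring.inverse_mul_cancel _ (isUnit_one_add_mul_adj T)
  have hs' : (1 + T*a) * s = 1 := Ring.mul_inverse_cancel _ (isUnit_one_add_mul_adj T)
  have hstar_r : star r = r := star_rT T
  have hstar_s : star s = s := star_sT T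
  refine ⟨?_, ?_, ?_⟩
  · -- selfadjoint
    refine blk_selfAdjoint hstar_r ?_ ?_
    · show star (1 - s) = 1 - s
      rw [star_sub, star_one, hstar_s]
    · rw [← star_eq_adjoint, star_mul, hstar_r, ← ha, star_eq_adjoint]
  · -- idempotent
    show grP T * grP T = grP T
    rw [ContinuousLinearMap.mul_def, grP, ← hr, ← hsdef, ← ha, blk_comp,
      gp_E11 hra har hs hs', gp_E12 hra har hs hs', gp_E21 hra har hs hs',
      gp_E22 hra har hs hs']
  · -- range
    apply le_antisymm
    · rintro z ⟨w, rfl⟩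
      rw [mem_boundedGraph]
      show (T * r) w.fst + (1 - s) w.snd = T (r w.fst + (r * a) w.snd)
      rw [map_add]
      have h1 : T ((r * a) w.snd) = (T * (r * a)) w.snd := rfl
      have h2 : T (r w.fst) = (T * r) w.fst := rfl
      rw [h1, h2, gp_hD hra har hs hs']
    · intro z hz
      rw [mem_boundedGraph] at hz
      refine ⟨z, ?_⟩
      refine wlp_ext ?_ ?_
      · show r z.fst + (r * a) z.snd = z.fst
        rw [hz]
        have h1 : (r * a) (T z.fst) = ((r * a) * T) z.fst := rfl
        rw [h1, ← ContinuousLinearMap.add_apply, gp_hfix hra har hs hs',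
          ContinuousLinearMap.one_apply]
      · show (T * r) z.fst + (1 - s) z.snd = z.snd
        rw [hz]
        have h1 : (1 - s) (T z.fst) = ((1 - s) * T) z.fst := rfl
        rw [h1, ← ContinuousLinearMap.add_apply, gp_hfix2 hra har hs hs']

end Aux

/-- Let `T, S : H → H` be bounded operators on a complex Hilbert space, let
`R_T = (1 + T*T)⁻¹`, `R_{T*} = (1 + TT*)⁻¹` (and similarly for `S`), and let
`d(T,S) = max{‖R_T − R_S‖, ‖R_{T*} − R_{S*}‖, ‖T R_T − S R_S‖}`. Then, with `P_{G(T)}`,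
`P_{G(S)}` the orthogonal projections of `H ⊕ H` onto the graphs of `T` and `S`,
one has `d(T,S) ≤ ‖P_{G(T)} − P_{G(S)}‖ ≤ 4·d(T,S)`. -/
theorem stmt_1 {H : Type*} [NormedAddCommGroup H] [InnerProductSpace ℂ H] [CompleteSpace H]
    (T S : H →L[ℂ] H)
    (PT PS : WithLp 2 (H × H) →L[ℂ] WithLp 2 (H × H))
    (hPT : IsOrthogonalProjectionOnto PT (boundedGraph T))
    (hPS : IsOrthogonalProjectionOnto PS (boundedGraph S)) :
    max (max ‖Ring.inverse (1 + ContinuousLinearMap.adjoint T * T) -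
              Ring.inverse (1 + ContinuousLinearMap.adjoint S * S)‖
          ‖Ring.inverse (1 + T * ContinuousLinearMap.adjoint T) -
              Ring.inverse (1 + S * ContinuousLinearMap.adjoint S)‖)
        ‖T * Ring.inverse (1 + ContinuousLinearMap.adjoint T * T) -
            S * Ring.inverse (1 + ContinuousLinearMap.adjoint S * S)‖ ≤ ‖PT - PS‖ ∧
    ‖PT - PS‖ ≤ 4 *
      max (max ‖Ring.inverse (1 + ContinuousLinearMap.adjoint T * T) -
                Ring.inverse (1 + ContinuousLinearMap.adjoint S * S)‖
            ‖Ring.inverse (1 + T * ContinuousLinearMap.adjoint T) -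
                Ring.inverse (1 + S * ContinuousLinearMap.adjoint S)‖)
          ‖T * Ring.inverse (1 + ContinuousLinearMap.adjoint T * T) -
              S * Ring.inverse (1 + ContinuousLinearMap.adjoint S * S)‖ := by
  have ePT : PT = grP T := orthProj_unique hPT (grP_isOrthProj T)
  have ePS : PS = grP S := orthProj_unique hPS (grP_isOrthProj S)
  set rT := Ring.inverse (1 + ContinuousLinearMap.adjoint T * T) with hrT
  set rS := Ring.inverse (1 + ContinuousLinearMap.adjoint S * S) with hrS
  set sT := Ring.inverse (1 + T * ContinuousLinearMap.adjoint T) with hsT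
  set sS := Ring.inverse (1 + S * ContinuousLinearMap.adjoint S) with hsS
  have hdiff : PT - PS =
      blk (rT - rS) (rT * adjoint T - rS * adjoint S) (T * rT - S * rS)
        ((1 - sT) - (1 - sS)) := by
    rw [ePT, ePS, grP, grP, blk_sub]
  have hDeq : (1 - sT) - (1 - sS) = sS - sT := by abel
  have hDnorm : ‖(1 - sT) - (1 - sS)‖ = ‖sT - sS‖ := by rw [hDeq, norm_sub_rev]
  have hBnorm : ‖rT * adjoint T - rS * adjoint S‖ = ‖T * rT - S * rS‖ := by
    have : rT * adjoint T - rS * adjoint S = star (T * rT - S * rS) := by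
      rw [star_sub, star_mul, star_mul, star_rT T, star_rT S, star_eq_adjoint,
        star_eq_adjoint]
    rw [this, norm_star]
  constructor
  · refine max_le (max_le ?_ ?_) ?_
    · rw [hdiff]; exact norm_le_blk_A _ _ _ _
    · rw [hdiff, ← hDnorm]; exact norm_le_blk_D _ _ _ _
    · rw [hdiff]; exact norm_le_blk_C _ _ _ _
  · rw [hdiff]
    refine le_trans (norm_blk_le _ _ _ _) ?_
    set d := max (max ‖rT - rS‖ ‖sT - sS‖) ‖T * rT - S * rS‖ with hd
    have h1 : ‖rT - rS‖ ≤ d := le_trans (le_max_left _ _) (le_max_left _ _)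
    have h2 : ‖(1 - sT) - (1 - sS)‖ ≤ d := by
      rw [hDnorm]; exact le_trans (le_max_right _ _) (le_max_left _ _)
    have h3 : ‖T * rT - S * rS‖ ≤ d := le_max_right _ _
    have h4 : ‖rT * adjoint T - rS * adjoint S‖ ≤ d := by rw [hBnorm]; exact h3
    linarith
end

section
/- Let A be a unital complex C*-algebra and let a, b ∈ A be selfadjoint. Define d(a,b) = max{‖(1 + a²)⁻¹ − (1 + b²)⁻¹‖, ‖a(1 + a²)⁻¹ − b(1 + b²)⁻¹‖} and d̃(a,b) = ‖(a + i·1)⁻¹ − (b + i·1)⁻¹‖. Then (1/2)·d̃(a,b) ≤ d(a,b) ≤ d̃(a,b). -/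
open Complex in
lemma aux_commute_ringInverse {A : Type*} [Ring A] {x y : A} (hx : IsUnit y)
    (h : Commute x y) : Commute x (Ring.inverse y) := by
  obtain ⟨u, rfl⟩ := hx
  rw [Ring.inverse_unit]
  exact h.units_inv_right

open Complex in
lemma aux_units {A : Type*} [CStarAlgebra A] (a : A) (ha : IsSelfAdjoint a) :
    IsUnit (a + Complex.I • (1 : A)) ∧ IsUnit (a - Complex.I • (1 : A)) ∧
      IsUnit (1 + a ^ 2) := by
  have h1 : IsUnit (a + Complex.I • (1 : A)) := by
    have hmem : (-Complex.I) ∉ spectrum ℂ a := by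
      intro h
      have := ha.mem_spectrum_eq_re h
      simp [Complex.ext_iff] at this
    rw [spectrum.notMem_iff] at hmem
    have : (algebraMap ℂ A) (-Complex.I) - a = -(a + Complex.I • (1 : A)) := by
      rw [Algebra.algebraMap_eq_smul_one]
      module
    rw [this] at hmem
    simpa using hmem.neg
  have h2 : IsUnit (a - Complex.I • (1 : A)) := by
    have hmem : (Complex.I) ∉ spectrum ℂ a := by
      intro h
      have := ha.mem_spectrum_eq_re h
      simp [Complex.ext_iff] at this
    rw [spectrum.notMem_iff] at hmem
    have : (algebraMap ℂ A) (Complex.I) - a = -(a - Complex.I • (1 : A)) := by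
      rw [Algebra.algebraMap_eq_smul_one]
      module
    rw [this] at hmem
    simpa using hmem.neg
  refine ⟨h1, h2, ?_⟩
  have hprod : (a + Complex.I • (1 : A)) * (a - Complex.I • (1 : A)) = 1 + a ^ 2 := by
    have : (Complex.I • (1 : A)) * (Complex.I • (1 : A)) = -1 := by
      rw [smul_mul_smul_comm, one_mul, Complex.I_mul_I, neg_smul, one_smul]
    rw [mul_sub, add_mul, add_mul, this, smul_mul_assoc, mul_smul_comm, one_mul, mul_one, sq]
    abel
  rw [← hprod]
  exact h1.mul h2

open Complex in
lemma aux_inv_formula {A : Type*} [CStarAlgebra A] (a : A) (ha : IsSelfAdjoint a) :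
    Ring.inverse (a + Complex.I • (1 : A)) =
      a * Ring.inverse (1 + a ^ 2) - Complex.I • Ring.inverse (1 + a ^ 2) := by
  obtain ⟨h1, h2, h3⟩ := aux_units a ha
  set t := Ring.inverse (1 + a ^ 2) with ht
  have hct : Commute (a - Complex.I • (1 : A)) t := by
    apply aux_commute_ringInverse h3
    have : Commute (a - Complex.I • (1 : A)) a := by
      simp [Commute, SemiconjBy, sub_mul, mul_sub, smul_mul_assoc, mul_smul_comm]
    simpa [Commute, SemiconjBy, mul_add, add_mul, sq] using
      (Commute.one_right _).add_right (this.mul_right this)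
  have hprod : (a + Complex.I • (1 : A)) * (a - Complex.I • (1 : A)) = 1 + a ^ 2 := by
    have : (Complex.I • (1 : A)) * (Complex.I • (1 : A)) = -1 := by
      rw [smul_mul_smul_comm, one_mul, Complex.I_mul_I, neg_smul, one_smul]
    rw [mul_sub, add_mul, add_mul, this, smul_mul_assoc, mul_smul_comm, one_mul, mul_one, sq]
    abel
  have hprod' : (a - Complex.I • (1 : A)) * (a + Complex.I • (1 : A)) = 1 + a ^ 2 := by
    have : (Complex.I • (1 : A)) * (Complex.I • (1 : A)) = -1 := by
      rw [smul_mul_smul_comm, one_mul, Complex.I_mul_I, neg_smul, one_smul]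
    rw [mul_add, sub_mul, sub_mul, this, smul_mul_assoc, mul_smul_comm, one_mul, mul_one, sq]
    abel
  have key : Ring.inverse (a + Complex.I • (1 : A)) = (a - Complex.I • (1 : A)) * t := by
    have hxy : (a + Complex.I • (1 : A)) * ((a - Complex.I • (1 : A)) * t) = 1 := by
      rw [← mul_assoc, hprod, Ring.mul_inverse_cancel _ h3]
    calc Ring.inverse (a + Complex.I • (1 : A))
        = Ring.inverse (a + Complex.I • (1 : A)) *
            ((a + Complex.I • (1 : A)) * ((a - Complex.I • (1 : A)) * t)) := by
          rw [hxy, mul_one]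
      _ = (a - Complex.I • (1 : A)) * t := by
          rw [← mul_assoc, Ring.inverse_mul_cancel _ h1, one_mul]
  rw [key, sub_mul, smul_mul_assoc, one_mul]

open Complex in
lemma aux_inv_formula' {A : Type*} [CStarAlgebra A] (a : A) (ha : IsSelfAdjoint a) :
    star (Ring.inverse (a + Complex.I • (1 : A))) =
      a * Ring.inverse (1 + a ^ 2) + Complex.I • Ring.inverse (1 + a ^ 2) := by
  rw [aux_inv_formula a ha, star_sub, star_smul, star_mul]
  have hsa : IsSelfAdjoint (Ring.inverse (1 + a ^ 2)) := by
    rw [IsSelfAdjoint, ← Ring.inverse_star]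
    congr 1
    simp [ha.star_eq, sq]
  have hc : Commute a (Ring.inverse (1 + a ^ 2)) := by
    apply aux_commute_ringInverse (aux_units a ha).2.2
    have : Commute a (1 + a * a) :=
      (Commute.one_right a).add_right ((Commute.refl a).mul_right (Commute.refl a))
    simpa [sq] using this
  rw [hsa.star_eq, ha.star_eq, ← hc.eq]
  simp [sub_eq_add_neg, Complex.star_def]


/-- Let `A` be a unital complex C*-algebra and let `a, b ∈ A` be selfadjoint. Define
`d(a,b) = max{‖(1 + a²)⁻¹ − (1 + b²)⁻¹‖, ‖a(1 + a²)⁻¹ − b(1 + b²)⁻¹‖}` and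
`d̃(a,b) = ‖(a + i·1)⁻¹ − (b + i·1)⁻¹‖`. Then `(1/2)·d̃(a,b) ≤ d(a,b) ≤ d̃(a,b)`. -/
theorem stmt_6 {A : Type*} [CStarAlgebra A] (a b : A)
    (ha : IsSelfAdjoint a) (hb : IsSelfAdjoint b) :
    (1 / 2 : ℝ) * ‖Ring.inverse (a + Complex.I • (1 : A)) -
        Ring.inverse (b + Complex.I • (1 : A))‖ ≤
      max ‖Ring.inverse (1 + a ^ 2) - Ring.inverse (1 + b ^ 2)‖
        ‖a * Ring.inverse (1 + a ^ 2) - b * Ring.inverse (1 + b ^ 2)‖ ∧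
    max ‖Ring.inverse (1 + a ^ 2) - Ring.inverse (1 + b ^ 2)‖
        ‖a * Ring.inverse (1 + a ^ 2) - b * Ring.inverse (1 + b ^ 2)‖ ≤
      ‖Ring.inverse (a + Complex.I • (1 : A)) - Ring.inverse (b + Complex.I • (1 : A))‖ := by
  set ia := Ring.inverse (1 + a ^ 2)
  set ib := Ring.inverse (1 + b ^ 2)
  set f := ia - ib with hf
  set g := a * ia - b * ib with hg
  set D := Ring.inverse (a + Complex.I • (1 : A)) - Ring.inverse (b + Complex.I • (1 : A))
    with hD
  have hDplus : D = g - Complex.I • f := by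
    rw [hD, aux_inv_formula a ha, aux_inv_formula b hb, hg, hf, smul_sub]
    abel
  have hDminus : star D = g + Complex.I • f := by
    rw [hD, star_sub, aux_inv_formula' a ha, aux_inv_formula' b hb, hg, hf, smul_sub]
    abel
  have hnormstar : ‖star D‖ = ‖D‖ := norm_star D
  have hfD : ‖f‖ ≤ ‖D‖ := by
    have h2f : star D - D = (2 * Complex.I) • f := by
      rw [hDminus, hDplus, two_mul, add_smul]; abel
    have : ‖star D - D‖ = 2 * ‖f‖ := by
      rw [h2f, norm_smul]
      simp
    nlinarith [norm_sub_le (star D) D, norm_nonneg f]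
  have hgD : ‖g‖ ≤ ‖D‖ := by
    have h2g : star D + D = (2 : ℂ) • g := by
      rw [hDminus, hDplus, two_smul]; abel
    have : ‖star D + D‖ = 2 * ‖g‖ := by
      rw [h2g, norm_smul]; simp
    nlinarith [norm_add_le (star D) D, norm_nonneg g]
  constructor
  · have hDle : ‖D‖ ≤ ‖g‖ + ‖f‖ := by
      calc ‖D‖ = ‖g - Complex.I • f‖ := by rw [hDplus]
        _ ≤ ‖g‖ + ‖Complex.I • f‖ := norm_sub_le _ _
        _ = ‖g‖ + ‖f‖ := by rw [norm_smul]; simp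
    have h1 : ‖f‖ ≤ max ‖f‖ ‖g‖ := le_max_left _ _
    have h2 : ‖g‖ ≤ max ‖f‖ ‖g‖ := le_max_right _ _
    linarith
  · exact max_le hfD hgD
end

section
/- Let A be a unital C*-algebra and a, b ∈ A. Set R_a = (1 + a*a)⁻¹, R_{a*} = (1 + aa*)⁻¹ and similarly for b, and let d(a,b) = max{‖R_a − R_b‖, ‖R_{a*} − R_{b*}‖, ‖aR_a − bR_b‖}. Then [(1 + ‖a‖²)(1 + ‖b‖)]⁻¹·‖a − b‖ ≤ d(a,b) ≤ max{‖a‖ + ‖b‖, 1 + ‖b‖(‖a‖ + ‖b‖)}·‖a − b‖. -/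
section Helpers

lemma gap_inverse_sub {A : Type*} [Ring A] {u v : A} (hu : IsUnit u) (hv : IsUnit v) :
    Ring.inverse u - Ring.inverse v = Ring.inverse u * (v - u) * Ring.inverse v := by
  have h1 : Ring.inverse u * v * Ring.inverse v = Ring.inverse u := by
    rw [mul_assoc, Ring.mul_inverse_cancel _ hv, mul_one]
  have h2 : Ring.inverse u * u * Ring.inverse v = Ring.inverse v := by
    rw [Ring.inverse_mul_cancel _ hu, one_mul]
  rw [mul_sub, sub_mul, h1, h2]

lemma gap_unit_swap {A : Type*} [Ring A] {u v x y : A} (hu : IsUnit u) (hv : IsUnit v)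
    (h : x * u = v * y) : Ring.inverse v * x = y * Ring.inverse u := by
  calc Ring.inverse v * x
      = Ring.inverse v * x * (u * Ring.inverse u) := by
        rw [Ring.mul_inverse_cancel _ hu, mul_one]
    _ = Ring.inverse v * (x * u) * Ring.inverse u := by noncomm_ring
    _ = Ring.inverse v * (v * y) * Ring.inverse u := by rw [h]
    _ = (Ring.inverse v * v) * (y * Ring.inverse u) := by noncomm_ring
    _ = y * Ring.inverse u := by rw [Ring.inverse_mul_cancel _ hv, one_mul]

lemma gap_sandwich {A : Type*} [NormedRing A] {r s : A} (x : A) (hr : ‖r‖ ≤ 1)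
    (hs : ‖s‖ ≤ 1) : ‖r * x * s‖ ≤ ‖x‖ := by
  nlinarith [norm_mul_le r x, norm_mul_le (r * x) s, norm_nonneg x, norm_nonneg s,
    norm_nonneg (r * x), norm_nonneg r]

variable {A : Type*} [CStarAlgebra A] [PartialOrder A] [StarOrderedRing A]

lemma gap_aux_unit {x : A} (hx : 0 ≤ x) : IsUnit (1 + x) :=
  CStarAlgebra.isUnit_of_le 1 (le_add_of_nonneg_right hx) isStrictlyPositive_one

lemma gap_aux_norm {x : A} (hx : 0 ≤ x) : ‖Ring.inverse (1 + x)‖ ≤ 1 := by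
  obtain ⟨u, hu⟩ := gap_aux_unit hx
  have hu0 : 0 ≤ (u : A) := by rw [hu]; exact add_nonneg zero_le_one hx
  have h1u : ((1 : Aˣ) : A) ≤ (u : A) := by
    rw [Units.val_one, hu]; exact le_add_of_nonneg_right hx
  have hle : (↑u⁻¹ : A) ≤ ↑(1 : Aˣ)⁻¹ :=
    CStarAlgebra.inv_le_inv (by rw [Units.val_one]; exact zero_le_one) h1u
  simp only [inv_one, Units.val_one] at hle
  have hnn : (0 : A) ≤ ↑u⁻¹ := CFC.inv_nonneg_of_nonneg u hu0
  rw [← hu, Ring.inverse_unit]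
  exact (CStarAlgebra.norm_le_one_iff_of_nonneg _ hnn).mpr hle

lemma gap_d1 (a b : A) :
    ‖Ring.inverse (1 + star a * a) - Ring.inverse (1 + star b * b)‖ ≤
      (‖a‖ + ‖b‖) * ‖a - b‖ := by
  have hua : IsUnit (1 + star a * a) := gap_aux_unit (star_mul_self_nonneg a)
  have hub : IsUnit (1 + star b * b) := gap_aux_unit (star_mul_self_nonneg b)
  have nra : ‖Ring.inverse (1 + star a * a)‖ ≤ 1 := gap_aux_norm (star_mul_self_nonneg a)
  have nrb : ‖Ring.inverse (1 + star b * b)‖ ≤ 1 := gap_aux_norm (star_mul_self_nonneg b)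
  set ra := Ring.inverse (1 + star a * a)
  set rb := Ring.inverse (1 + star b * b)
  have key : ra - rb = ra * (star b * (b - a)) * rb + ra * ((star b - star a) * a) * rb := by
    rw [gap_inverse_sub hua hub]; noncomm_ring
  have h1 : ‖ra * (star b * (b - a)) * rb‖ ≤ ‖b‖ * ‖a - b‖ := by
    refine (gap_sandwich _ nra nrb).trans ?_
    calc ‖star b * (b - a)‖ ≤ ‖star b‖ * ‖b - a‖ := norm_mul_le _ _
      _ = ‖b‖ * ‖a - b‖ := by rw [norm_star, norm_sub_rev]
  have h2 : ‖ra * ((star b - star a) * a) * rb‖ ≤ ‖a - b‖ * ‖a‖ := by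
    refine (gap_sandwich _ nra nrb).trans ?_
    calc ‖(star b - star a) * a‖ ≤ ‖star b - star a‖ * ‖a‖ := norm_mul_le _ _
      _ = ‖a - b‖ * ‖a‖ := by rw [← star_sub, norm_star, norm_sub_rev]
  calc ‖ra - rb‖ ≤ ‖ra * (star b * (b - a)) * rb‖ + ‖ra * ((star b - star a) * a) * rb‖ := by
        rw [key]; exact norm_add_le _ _
    _ ≤ ‖b‖ * ‖a - b‖ + ‖a - b‖ * ‖a‖ := add_le_add h1 h2
    _ = (‖a‖ + ‖b‖) * ‖a - b‖ := by ring

end Helpers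

/-- Let `A` be a unital C*-algebra and `a, b ∈ A`. Set `R_a = (1 + a*a)⁻¹`,
`R_{a*} = (1 + aa*)⁻¹` and similarly for `b`, and let
`d(a,b) = max{‖R_a − R_b‖, ‖R_{a*} − R_{b*}‖, ‖aR_a − bR_b‖}`. Then
`[(1 + ‖a‖²)(1 + ‖b‖)]⁻¹·‖a − b‖ ≤ d(a,b)` and
`d(a,b) ≤ max{‖a‖ + ‖b‖, 1 + ‖b‖(‖a‖ + ‖b‖)}·‖a − b‖`. -/
theorem stmt_9 {A : Type*} [CStarAlgebra A] (a b : A) :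
    ((1 + ‖a‖ ^ 2) * (1 + ‖b‖))⁻¹ * ‖a - b‖ ≤
      max (max ‖Ring.inverse (1 + star a * a) - Ring.inverse (1 + star b * b)‖
            ‖Ring.inverse (1 + a * star a) - Ring.inverse (1 + b * star b)‖)
        ‖a * Ring.inverse (1 + star a * a) - b * Ring.inverse (1 + star b * b)‖ ∧
    max (max ‖Ring.inverse (1 + star a * a) - Ring.inverse (1 + star b * b)‖
          ‖Ring.inverse (1 + a * star a) - Ring.inverse (1 + b * star b)‖)
        ‖a * Ring.inverse (1 + star a * a) - b * Ring.inverse (1 + star b * b)‖ ≤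
      max (‖a‖ + ‖b‖) (1 + ‖b‖ * (‖a‖ + ‖b‖)) * ‖a - b‖ := by
  rcases subsingleton_or_nontrivial A with hA | hA
  · constructor <;> simp [Subsingleton.elim a b]
  letI := CStarAlgebra.spectralOrder A
  letI := CStarAlgebra.spectralOrderedRing A
  have hua : IsUnit (1 + star a * a) := gap_aux_unit (star_mul_self_nonneg a)
  have hub : IsUnit (1 + star b * b) := gap_aux_unit (star_mul_self_nonneg b)
  have hua' : IsUnit (1 + a * star a) := gap_aux_unit (mul_star_self_nonneg a)
  have hub' : IsUnit (1 + b * star b) := gap_aux_unit (mul_star_self_nonneg b)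
  have nra' : ‖Ring.inverse (1 + a * star a)‖ ≤ 1 := gap_aux_norm (mul_star_self_nonneg a)
  set ra := Ring.inverse (1 + star a * a) with hra_def
  set rb := Ring.inverse (1 + star b * b) with hrb_def
  set ra' := Ring.inverse (1 + a * star a) with hra'_def
  set rb' := Ring.inverse (1 + b * star b) with hrb'_def
  -- commutation relations
  have comm_a : ra' * a = a * ra :=
    gap_unit_swap hua hua' (by noncomm_ring)
  have comm_b : rb' * b = b * rb :=
    gap_unit_swap hub hub' (by noncomm_ring)
  -- the three distance bounds
  have hd1 : ‖ra - rb‖ ≤ (‖a‖ + ‖b‖) * ‖a - b‖ := gap_d1 a b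
  have hd2 : ‖ra' - rb'‖ ≤ (‖a‖ + ‖b‖) * ‖a - b‖ := by
    have := gap_d1 (star a) (star b)
    simpa [star_star, ← star_sub, norm_star] using this
  have hd3 : ‖a * ra - b * rb‖ ≤ (1 + ‖b‖ * (‖a‖ + ‖b‖)) * ‖a - b‖ := by
    have split : a * ra - b * rb = ra' * (a - b) + (ra' - rb') * b := by
      rw [← comm_a, ← comm_b]; noncomm_ring
    calc ‖a * ra - b * rb‖ ≤ ‖ra' * (a - b)‖ + ‖(ra' - rb') * b‖ := by
          rw [split]; exact norm_add_le _ _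
      _ ≤ ‖ra'‖ * ‖a - b‖ + ‖ra' - rb'‖ * ‖b‖ := add_le_add (norm_mul_le _ _) (norm_mul_le _ _)
      _ ≤ 1 * ‖a - b‖ + ((‖a‖ + ‖b‖) * ‖a - b‖) * ‖b‖ := by
          have h1 : ‖ra'‖ * ‖a - b‖ ≤ 1 * ‖a - b‖ :=
            mul_le_mul_of_nonneg_right nra' (norm_nonneg _)
          have h2 : ‖ra' - rb'‖ * ‖b‖ ≤ ((‖a‖ + ‖b‖) * ‖a - b‖) * ‖b‖ :=
            mul_le_mul_of_nonneg_right hd2 (norm_nonneg _)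
          linarith
      _ = (1 + ‖b‖ * (‖a‖ + ‖b‖)) * ‖a - b‖ := by ring
  set d := max (max ‖ra - rb‖ ‖ra' - rb'‖) ‖a * ra - b * rb‖ with hd_def
  have hd2d : ‖ra' - rb'‖ ≤ d := le_trans (le_max_right _ _) (le_max_left _ _)
  have hd3d : ‖a * ra - b * rb‖ ≤ d := le_max_right _ _
  have hd_nonneg : 0 ≤ d := le_trans (norm_nonneg _) hd3d
  constructor
  · -- lower bound
    have key : a - b = (1 + a * star a) * ((a * ra - b * rb) - (ra' - rb') * b) := by
      rw [← comm_a, ← comm_b]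
      have c1 : (1 + a * star a) * ra' = 1 := Ring.mul_inverse_cancel _ hua'
      calc a - b = ((1 + a * star a) * ra') * a - ((1 + a * star a) * ra') * b := by
            rw [c1, one_mul, one_mul]
        _ = (1 + a * star a) * ((ra' * a - rb' * b) - (ra' - rb') * b) := by noncomm_ring
    have hnorm1 : ‖(1 : A) + a * star a‖ ≤ 1 + ‖a‖ ^ 2 := by
      calc ‖(1 : A) + a * star a‖ ≤ ‖(1 : A)‖ + ‖a * star a‖ := norm_add_le _ _
        _ ≤ 1 + ‖a‖ ^ 2 := by
            rw [CStarRing.norm_one, CStarRing.norm_self_mul_star, sq]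
    have hab : ‖a - b‖ ≤ (1 + ‖a‖ ^ 2) * (1 + ‖b‖) * d := by
      calc ‖a - b‖ ≤ ‖(1 : A) + a * star a‖ * ‖(a * ra - b * rb) - (ra' - rb') * b‖ := by
            rw [key]; exact norm_mul_le _ _
        _ ≤ (1 + ‖a‖ ^ 2) * (‖a * ra - b * rb‖ + ‖ra' - rb'‖ * ‖b‖) := by
            apply mul_le_mul hnorm1 _ (norm_nonneg _) (by positivity)
            exact (norm_sub_le _ _).trans (add_le_add le_rfl (norm_mul_le _ _))
        _ ≤ (1 + ‖a‖ ^ 2) * (1 + ‖b‖) * d := by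
            have hb : ‖ra' - rb'‖ * ‖b‖ ≤ d * ‖b‖ :=
              mul_le_mul_of_nonneg_right hd2d (norm_nonneg _)
            nlinarith [norm_nonneg a, norm_nonneg b, sq_nonneg ‖a‖, hd3d, hd_nonneg]
    have hpos : (0 : ℝ) < (1 + ‖a‖ ^ 2) * (1 + ‖b‖) := by positivity
    rw [inv_mul_le_iff₀ hpos]
    exact hab
  · -- upper bound
    have hM : (‖a‖ + ‖b‖) ≤ max (‖a‖ + ‖b‖) (1 + ‖b‖ * (‖a‖ + ‖b‖)) := le_max_left _ _
    have hM' : (1 + ‖b‖ * (‖a‖ + ‖b‖)) ≤ max (‖a‖ + ‖b‖) (1 + ‖b‖ * (‖a‖ + ‖b‖)) :=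
      le_max_right _ _
    refine max_le (max_le ?_ ?_) ?_
    · exact hd1.trans (mul_le_mul_of_nonneg_right hM (norm_nonneg _))
    · exact hd2.trans (mul_le_mul_of_nonneg_right hM (norm_nonneg _))
    · exact hd3.trans (mul_le_mul_of_nonneg_right hM' (norm_nonneg _))
end

section
/- Let A be a unital C*-algebra and a, b ∈ A. With R_a = (1 + a*a)⁻¹ and R_b = (1 + b*b)⁻¹, one has ‖aR_a − bR_b‖ ≤ (1 + ‖b‖(‖a‖ + ‖b‖))·‖a − b‖. -/
lemma aux_unit_norm {A : Type*} [CStarAlgebra A] (a : A) :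
    IsUnit (1 + star a * a) ∧ ‖Ring.inverse (1 + star a * a)‖ ≤ 1 := by
  letI := CStarAlgebra.spectralOrder A
  haveI := CStarAlgebra.spectralOrderedRing A
  have hx : (0 : A) ≤ star a * a := star_mul_self_nonneg a
  have h1 : (1 : A) ≤ 1 + star a * a := le_add_of_nonneg_right hx
  have hu : IsUnit (1 + star a * a) :=
    CStarAlgebra.isUnit_of_le 1 h1
  refine ⟨hu, ?_⟩
  rw [← hu.unit_spec, Ring.inverse_unit]
  have hnn : (0 : A) ≤ (hu.unit : A) := by rw [hu.unit_spec]; exact zero_le_one.trans h1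
  have hinv_nonneg : (0 : A) ≤ (↑hu.unit⁻¹ : A) := CFC.inv_nonneg_of_nonneg hu.unit hnn
  have hle : (↑hu.unit⁻¹ : A) ≤ ↑(1 : Aˣ)⁻¹ := by
    refine CStarAlgebra.inv_le_inv (a := (1 : Aˣ)) (by simp) ?_
    simpa [hu.unit_spec] using h1
  rw [(CStarAlgebra.norm_le_one_iff_of_nonneg _ hinv_nonneg)]
  simp only [inv_one, Units.val_one] at hle
  exact hle

/-- Let `A` be a unital C*-algebra and `a, b ∈ A`. With `R_a = (1 + a*a)⁻¹` and
`R_b = (1 + b*b)⁻¹`, one has `‖aR_a − bR_b‖ ≤ (1 + ‖b‖(‖a‖ + ‖b‖))·‖a − b‖`. -/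
theorem stmt_11 {A : Type*} [CStarAlgebra A] (a b : A) :
    ‖a * Ring.inverse (1 + star a * a) - b * Ring.inverse (1 + star b * b)‖ ≤
      (1 + ‖b‖ * (‖a‖ + ‖b‖)) * ‖a - b‖ := by
  obtain ⟨hu, hu1⟩ := aux_unit_norm a
  obtain ⟨hv, hv1⟩ := aux_unit_norm b
  obtain ⟨hw', hw1⟩ := aux_unit_norm (star a)
  rw [star_star] at hw' hw1
  rw [← hu.unit_spec, Ring.inverse_unit] at hu1
  rw [← hv.unit_spec, Ring.inverse_unit] at hv1
  rw [← hw'.unit_spec, Ring.inverse_unit] at hw1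
  set u := hu.unit
  set v := hv.unit
  set w := hw'.unit
  have hus : (u : A) = 1 + star a * a := hu.unit_spec
  have huv : (v : A) = 1 + star b * b := hv.unit_spec
  have hws : (w : A) = 1 + a * star a := hw'.unit_spec
  rw [← hus, ← huv, Ring.inverse_unit, Ring.inverse_unit]
  -- commutation : a * u⁻¹ = w⁻¹ * a
  have hcomm : a * (↑u⁻¹ : A) = ↑w⁻¹ * a := by
    rw [Units.mul_inv_eq_iff_eq_mul, mul_assoc, eq_comm, Units.inv_mul_eq_iff_eq_mul, hus, hws]
    noncomm_ring
  -- the key identity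
  have key : a * (↑u⁻¹ : A) - b * ↑v⁻¹ =
      ↑w⁻¹ * (((a - b) + a * star (b - a) * b) * ↑v⁻¹) := by
    rw [hcomm]
    have : ((a - b) + a * star (b - a) * b) = a * ↑v - ↑w * b := by
      rw [huv, hws, star_sub]
      noncomm_ring
    rw [this, sub_mul, mul_sub]
    congr 1
    · rw [mul_assoc, Units.mul_inv, mul_one]
    · rw [← mul_assoc, ← mul_assoc, Units.inv_mul, one_mul]
  rw [key]
  have hXnorm : ‖(a - b) + a * star (b - a) * b‖ ≤ ‖a - b‖ + ‖a‖ * ‖a - b‖ * ‖b‖ := by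
    refine (norm_add_le _ _).trans ?_
    gcongr
    calc ‖a * star (b - a) * b‖ ≤ ‖a * star (b - a)‖ * ‖b‖ := norm_mul_le _ _
      _ ≤ ‖a‖ * ‖star (b - a)‖ * ‖b‖ := by gcongr; exact norm_mul_le _ _
      _ = ‖a‖ * ‖a - b‖ * ‖b‖ := by rw [norm_star, ← neg_sub a b, norm_neg]
  calc ‖(↑w⁻¹ : A) * (((a - b) + a * star (b - a) * b) * ↑v⁻¹)‖
      ≤ ‖(↑w⁻¹ : A)‖ * (‖(a - b) + a * star (b - a) * b‖ * ‖(↑v⁻¹ : A)‖) :=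
        (norm_mul_le _ _).trans (by gcongr; exact norm_mul_le _ _)
    _ ≤ 1 * (‖(a - b) + a * star (b - a) * b‖ * 1) := by gcongr
    _ = ‖(a - b) + a * star (b - a) * b‖ := by ring
    _ ≤ ‖a - b‖ + ‖a‖ * ‖a - b‖ * ‖b‖ := hXnorm
    _ ≤ (1 + ‖b‖ * (‖a‖ + ‖b‖)) * ‖a - b‖ := by
        have h1 : (0:ℝ) ≤ ‖a‖ := norm_nonneg a
        have h2 : (0:ℝ) ≤ ‖b‖ := norm_nonneg b
        have h3 : (0:ℝ) ≤ ‖a - b‖ := norm_nonneg _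
        nlinarith [mul_nonneg h3 (mul_nonneg h2 h2)]
end

section
/- Let A be a unital C*-algebra and a, b ∈ A. With R_a = (1 + a*a)⁻¹ and R_b = (1 + b*b)⁻¹, one has ‖a − b‖ ≤ (1 + ‖a‖²)·(‖aR_a − bR_b‖ + ‖b‖·‖R_a − R_b‖); in particular ‖a − b‖ ≤ (1 + ‖a‖²)(1 + ‖b‖)·max{‖R_a − R_b‖, ‖aR_a − bR_b‖}. -/
/-- Let `A` be a unital C*-algebra and `a, b ∈ A`. With `R_a = (1 + a*a)⁻¹` and
`R_b = (1 + b*b)⁻¹`, one has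
`‖a − b‖ ≤ (1 + ‖a‖²)·(‖aR_a − bR_b‖ + ‖b‖·‖R_a − R_b‖)`; in particular
`‖a − b‖ ≤ (1 + ‖a‖²)(1 + ‖b‖)·max{‖R_a − R_b‖, ‖aR_a − bR_b‖}`. -/
theorem stmt_12 {A : Type*} [CStarAlgebra A] (a b : A) :
    ‖a - b‖ ≤ (1 + ‖a‖ ^ 2) *
        (‖a * Ring.inverse (1 + star a * a) - b * Ring.inverse (1 + star b * b)‖ +
          ‖b‖ * ‖Ring.inverse (1 + star a * a) - Ring.inverse (1 + star b * b)‖) ∧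
    ‖a - b‖ ≤ (1 + ‖a‖ ^ 2) * (1 + ‖b‖) *
        max ‖Ring.inverse (1 + star a * a) - Ring.inverse (1 + star b * b)‖
          ‖a * Ring.inverse (1 + star a * a) - b * Ring.inverse (1 + star b * b)‖ := by
  rcases subsingleton_or_nontrivial A with h|h
  · constructor <;>
      · rw [Subsingleton.elim (a - b) 0, norm_zero]
        positivity
  letI := CStarAlgebra.spectralOrder A
  haveI := CStarAlgebra.spectralOrderedRing A
  set Ra := Ring.inverse (1 + star a * a) with hRa
  set Rb := Ring.inverse (1 + star b * b) with hRb
  have hu : IsUnit (1 + star a * a) :=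
    CStarAlgebra.isUnit_of_le 1
      (le_add_of_nonneg_right (star_mul_self_nonneg a)) isStrictlyPositive_one
  have hcancel : Ra * (1 + star a * a) = 1 := Ring.inverse_mul_cancel _ hu
  have key : a - b = (a * Ra - b * Rb - b * (Ra - Rb)) * (1 + star a * a) := by
    simp only [sub_mul, mul_sub, mul_assoc, hcancel, mul_one]
    abel
  have hX : ‖(1 : A) + star a * a‖ ≤ 1 + ‖a‖ ^ 2 := by
    calc ‖(1 : A) + star a * a‖ ≤ ‖(1 : A)‖ + ‖star a * a‖ := norm_add_le _ _
      _ = 1 + ‖a‖ ^ 2 := by rw [norm_one, CStarRing.norm_star_mul_self, sq]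
  have hsum : ‖a * Ra - b * Rb - b * (Ra - Rb)‖ ≤
      ‖a * Ra - b * Rb‖ + ‖b‖ * ‖Ra - Rb‖ := by
    calc ‖a * Ra - b * Rb - b * (Ra - Rb)‖
        ≤ ‖a * Ra - b * Rb‖ + ‖b * (Ra - Rb)‖ := norm_sub_le _ _
      _ ≤ ‖a * Ra - b * Rb‖ + ‖b‖ * ‖Ra - Rb‖ := by gcongr; exact norm_mul_le _ _
  have h1 : ‖a - b‖ ≤
      (1 + ‖a‖ ^ 2) * (‖a * Ra - b * Rb‖ + ‖b‖ * ‖Ra - Rb‖) := by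
    rw [key]
    calc ‖(a * Ra - b * Rb - b * (Ra - Rb)) * (1 + star a * a)‖
        ≤ ‖a * Ra - b * Rb - b * (Ra - Rb)‖ * ‖(1 : A) + star a * a‖ := norm_mul_le _ _
      _ ≤ (‖a * Ra - b * Rb‖ + ‖b‖ * ‖Ra - Rb‖) * (1 + ‖a‖ ^ 2) := by
          apply mul_le_mul hsum hX (norm_nonneg _)
          positivity
      _ = (1 + ‖a‖ ^ 2) * (‖a * Ra - b * Rb‖ + ‖b‖ * ‖Ra - Rb‖) := mul_comm _ _
  refine ⟨h1, h1.trans ?_⟩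
  rw [mul_assoc]
  gcongr (1 + ‖a‖ ^ 2) * ?_
  have m1 : ‖a * Ra - b * Rb‖ ≤ max ‖Ra - Rb‖ ‖a * Ra - b * Rb‖ := le_max_right _ _
  have m2 : ‖Ra - Rb‖ ≤ max ‖Ra - Rb‖ ‖a * Ra - b * Rb‖ := le_max_left _ _
  nlinarith [norm_nonneg b, norm_nonneg (Ra - Rb)]
end

section
/- Let H be a complex Hilbert space and t a densely defined closed operator on H. Then its adjoint t* is densely defined, and the operator t̂ on the Hilbert space H ⊕ H with domain Dom(t̂) = Dom(t) × Dom(t*) defined by t̂(x, y) = (t*y, tx) is selfadjoint, i.e. t̂ coincides with its adjoint (t̂)* as an unbounded operator on H ⊕ H. -/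
noncomputable section Stmt13Aux

open LinearPMap

set_option linter.unusedSectionVars false

variable {H : Type*} [NormedAddCommGroup H] [InnerProductSpace ℂ H] [CompleteSpace H]

local notation "⟪" x ", " y "⟫" => @inner ℂ _ _ x y
open LinearPMap

private abbrev eL : WithLp 2 (H × H) ≃ₗ[ℂ] H × H := WithLp.linearEquiv 2 ℂ (H × H)

private abbrev eC : WithLp 2 (H × H) ≃L[ℂ] H × H := WithLp.prodContinuousLinearEquiv 2 ℂ H H

/-- The unitary `V (x, y) = (-y, x)` on `WithLp 2 (H × H)`. -/
private def Vmap : WithLp 2 (H × H) ≃L[ℂ] WithLp 2 (H × H) :=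
  (eC (H := H)).trans <|
    ((ContinuousLinearEquiv.prodComm ℂ H H).trans
      ((ContinuousLinearEquiv.neg ℂ).prodCongr (ContinuousLinearEquiv.refl ℂ H))).trans
      (eC (H := H)).symm

private abbrev VL : WithLp 2 (H × H) →ₗ[ℂ] WithLp 2 (H × H) :=
  (Vmap (H := H)).toLinearEquiv.toLinearMap

private theorem VL_fst (z : WithLp 2 (H × H)) : (VL z).ofLp.1 = -z.ofLp.2 := rfl
private theorem VL_snd (z : WithLp 2 (H × H)) : (VL z).ofLp.2 = z.ofLp.1 := rfl

private theorem eL_apply (z : WithLp 2 (H × H)) : eL z = (z.ofLp.1, z.ofLp.2) := rfl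

private theorem eL_symm_fst (u : H × H) : ((eL (H := H)).symm u).ofLp.1 = u.1 := rfl
private theorem eL_symm_snd (u : H × H) : ((eL (H := H)).symm u).ofLp.2 = u.2 := rfl

/-- The graph of `t` as a submodule of `WithLp 2 (H × H)`. -/
private def Gr (t : H →ₗ.[ℂ] H) : Submodule ℂ (WithLp 2 (H × H)) :=
  t.graph.comap (eL (H := H)).toLinearMap

private theorem mem_Gr {t : H →ₗ.[ℂ] H} {z : WithLp 2 (H × H)} :
    z ∈ Gr t ↔ (z.ofLp.1, z.ofLp.2) ∈ t.graph := by
  rw [Gr, Submodule.mem_comap]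
  exact Iff.rfl

private theorem apply_of_mem_graph {t : H →ₗ.[ℂ] H} {x : H} {y : H} (h : (x, y) ∈ t.graph)
    (hx : x ∈ t.domain) : t ⟨x, hx⟩ = y := by
  rw [mem_graph_iff] at h
  obtain ⟨u, hu1, hu2⟩ := h
  have : u = ⟨x, hx⟩ := Subtype.ext hu1
  rw [← this, hu2]

/-- Characterization of membership in the graph of the adjoint. -/
private theorem mem_adjoint_graph_iff {t : H →ₗ.[ℂ] H} (hdense : Dense (t.domain : Set H))
    {y w : H} :
    (y, w) ∈ t.adjoint.graph ↔ ∀ x : t.domain, ⟪w, (x : H)⟫ = ⟪y, t x⟫ := by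
  constructor
  · intro h x
    rw [mem_graph_iff] at h
    obtain ⟨v, hv1, hv2⟩ := h
    subst hv2
    have := adjoint_isFormalAdjoint hdense v x
    rwa [hv1] at this
  · intro h
    have hy : y ∈ t.adjoint.domain := mem_adjoint_domain_of_exists y ⟨w, h⟩
    have hval : t.adjoint ⟨y, hy⟩ = w := adjoint_apply_eq hdense ⟨y, hy⟩ fun x => h x
    rw [mem_graph_iff]
    exact ⟨⟨y, hy⟩, rfl, hval⟩

private theorem isClosed_Gr {t : H →ₗ.[ℂ] H} (hclosed : IsClosed (t.graph : Set (H × H))) :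
    IsClosed ((Gr t : Set (WithLp 2 (H × H)))) := by
  have : (Gr t : Set (WithLp 2 (H × H))) = (eC (H := H)) ⁻¹' (t.graph : Set (H × H)) := by
    with_unfolding_all rfl
  rw [this]
  exact hclosed.preimage (eC (H := H)).continuous

private theorem isClosed_map_VL {K : Submodule ℂ (WithLp 2 (H × H))}
    (hK : IsClosed (K : Set (WithLp 2 (H × H)))) :
    IsClosed ((K.map (VL (H := H)) : Submodule ℂ (WithLp 2 (H × H))) :
      Set (WithLp 2 (H × H))) := by
  have : ((K.map (VL (H := H)) : Submodule ℂ (WithLp 2 (H × H))) : Set (WithLp 2 (H × H)))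
      = (Vmap (H := H)).symm ⁻¹' (K : Set (WithLp 2 (H × H))) := by
    ext z
    simp only [Submodule.map_coe, Set.mem_image, Set.mem_preimage, SetLike.mem_coe]
    constructor
    · rintro ⟨u, hu, rfl⟩
      have : (Vmap (H := H)).symm (VL u) = u := (Vmap (H := H)).symm_apply_apply u
      rwa [this]
    · intro hz
      exact ⟨(Vmap (H := H)).symm z, hz, (Vmap (H := H)).apply_symm_apply z⟩
  rw [this]
  exact hK.preimage (Vmap (H := H)).symm.continuous

/-- `Gr t.adjoint = (VL '' Gr t)ᗮ`. -/
private theorem Gr_adjoint_eq {t : H →ₗ.[ℂ] H} (hdense : Dense (t.domain : Set H)) :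
    Gr t.adjoint = ((Gr t).map (VL (H := H)))ᗮ := by
  ext z
  rw [Submodule.mem_orthogonal, mem_Gr, mem_adjoint_graph_iff hdense]
  constructor
  · intro h u hu
    obtain ⟨g, hg, rfl⟩ := Submodule.mem_map.mp hu
    rw [mem_Gr] at hg
    have hdom : g.ofLp.1 ∈ t.domain := mem_domain_of_mem_graph hg
    have hval : t ⟨g.ofLp.1, hdom⟩ = g.ofLp.2 := apply_of_mem_graph hg hdom
    have key := h ⟨g.ofLp.1, hdom⟩
    rw [hval] at key
    have key' : ⟪z.ofLp.2, g.ofLp.1⟫ = ⟪z.ofLp.1, g.ofLp.2⟫ := key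
    rw [WithLp.prod_inner_apply, VL_fst, VL_snd, inner_neg_left]
    have h3 : ⟪g.ofLp.1, z.ofLp.2⟫ = ⟪g.ofLp.2, z.ofLp.1⟫ := by
      rw [← inner_conj_symm g.ofLp.1 z.ofLp.2, key', inner_conj_symm]
    rw [h3]; ring
  · intro h x
    have hmm : (eL (H := H)).symm ((x : H), t x) ∈ Gr t := by
      rw [mem_Gr, eL_symm_fst, eL_symm_snd]
      exact t.mem_graph x
    have key := h _ (Submodule.mem_map_of_mem hmm)
    rw [WithLp.prod_inner_apply] at key
    have key' : -⟪(t x : H), z.ofLp.1⟫ + ⟪(x : H), z.ofLp.2⟫ = 0 := by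
      rw [VL_fst, VL_snd, eL_symm_fst, eL_symm_snd, inner_neg_left] at key
      exact key
    have key2 : ⟪(x : H), z.ofLp.2⟫ = ⟪(t x : H), z.ofLp.1⟫ := by linear_combination key'
    rw [← inner_conj_symm z.ofLp.2 ((x : H)), ← inner_conj_symm z.ofLp.1 ((t x : H)), key2]

/-- `VL '' Gr t.adjoint = (Gr t)ᗮ`. -/
private theorem map_Gr_adjoint_eq {t : H →ₗ.[ℂ] H} (hdense : Dense (t.domain : Set H)) :
    (Gr t.adjoint).map (VL (H := H)) = (Gr t)ᗮ := by
  ext z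
  rw [Submodule.mem_orthogonal]
  constructor
  · intro hz u hu
    obtain ⟨g, hg, rfl⟩ := Submodule.mem_map.mp hz
    rw [mem_Gr] at hg hu
    have hdom : u.ofLp.1 ∈ t.domain := mem_domain_of_mem_graph hu
    have hvalu : t ⟨u.ofLp.1, hdom⟩ = u.ofLp.2 := apply_of_mem_graph hu hdom
    have hkey := (mem_adjoint_graph_iff hdense).mp hg ⟨u.ofLp.1, hdom⟩
    rw [hvalu] at hkey
    have key' : ⟪g.ofLp.2, u.ofLp.1⟫ = ⟪g.ofLp.1, u.ofLp.2⟫ := hkey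
    rw [WithLp.prod_inner_apply, VL_fst, VL_snd, inner_neg_right]
    have h3 : ⟪u.ofLp.1, g.ofLp.2⟫ = ⟪u.ofLp.2, g.ofLp.1⟫ := by
      rw [← inner_conj_symm u.ofLp.1 g.ofLp.2, key', inner_conj_symm]
    rw [h3]; ring
  · intro hz
    have hadj : (-z.ofLp.2, z.ofLp.1) ∈ t.adjoint.graph := by
      rw [mem_adjoint_graph_iff hdense]
      intro x
      have hmm : (eL (H := H)).symm ((x : H), t x) ∈ Gr t := by
        rw [mem_Gr, eL_symm_fst, eL_symm_snd]
        exact t.mem_graph x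
      have key := hz _ hmm
      rw [WithLp.prod_inner_apply] at key
      have key' : ⟪(x : H), z.ofLp.1⟫ + ⟪(t x : H), z.ofLp.2⟫ = 0 := by
        rw [eL_symm_fst, eL_symm_snd] at key
        exact key
      have key2 : ⟪(x : H), z.ofLp.1⟫ = -⟪(t x : H), z.ofLp.2⟫ := by linear_combination key'
      rw [inner_neg_left, ← inner_conj_symm z.ofLp.1 ((x : H)), key2, _root_.map_neg, inner_conj_symm]
    have hadj' : (z.ofLp.2, -z.ofLp.1) ∈ t.adjoint.graph := by
      have := neg_mem hadj
      simpa using this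
    refine Submodule.mem_map.mpr ⟨(eL (H := H)).symm (z.ofLp.2, -z.ofLp.1), ?_, ?_⟩
    · rw [mem_Gr, eL_symm_fst, eL_symm_snd]
      exact hadj'
    · have h1 : (VL ((eL (H := H)).symm (z.ofLp.2, -z.ofLp.1))).ofLp.1 = z.ofLp.1 := by
        rw [VL_fst, eL_symm_snd, neg_neg]
      have h2 : (VL ((eL (H := H)).symm (z.ofLp.2, -z.ofLp.1))).ofLp.2 = z.ofLp.2 := by
        rw [VL_snd, eL_symm_fst]
      exact WithLp.ofLp_injective 2 (Prod.ext h1 h2)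

/-- Part 1: the adjoint is densely defined. -/
private theorem adjoint_dense {t : H →ₗ.[ℂ] H} (hdense : Dense (t.domain : Set H))
    (hclosed : IsClosed (t.graph : Set (H × H))) :
    Dense (t.adjoint.domain : Set H) := by
  rw [Submodule.dense_iff_topologicalClosure_eq_top, Submodule.topologicalClosure_eq_top_iff,
    Submodule.eq_bot_iff]
  intro v hv
  have hmem : (eL (H := H)).symm (v, 0) ∈ (Gr t.adjoint)ᗮ := by
    rw [Submodule.mem_orthogonal]
    intro u hu
    rw [mem_Gr] at hu
    have hdom : u.ofLp.1 ∈ t.adjoint.domain := mem_domain_of_mem_graph hu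
    rw [WithLp.prod_inner_apply]
    show ⟪u.ofLp.1, (v : H)⟫ + ⟪u.ofLp.2, (0 : H)⟫ = 0
    rw [Submodule.mem_orthogonal] at hv
    rw [inner_zero_right, add_zero, hv u.ofLp.1 hdom]
  have hGr : (Gr t.adjoint)ᗮ = (Gr t).map (VL (H := H)) := by
    rw [Gr_adjoint_eq hdense]
    haveI : CompleteSpace ((Gr t).map (VL (H := H))) :=
      (isClosed_map_VL (isClosed_Gr hclosed)).completeSpace_coe
    exact Submodule.orthogonal_orthogonal _
  rw [hGr] at hmem
  obtain ⟨g, hg, hgeq⟩ := Submodule.mem_map.mp hmem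
  rw [mem_Gr] at hg
  have h1 : -g.ofLp.2 = v := by rw [← VL_fst, hgeq, eL_symm_fst]
  have h2 : g.ofLp.1 = 0 := by rw [← VL_snd, hgeq, eL_symm_snd]
  have hdom : g.ofLp.1 ∈ t.domain := mem_domain_of_mem_graph hg
  have hval : t ⟨g.ofLp.1, hdom⟩ = g.ofLp.2 := apply_of_mem_graph hg hdom
  have hz : g.ofLp.2 = 0 := by
    rw [← hval]
    have : (⟨g.ofLp.1, hdom⟩ : t.domain) = 0 := Subtype.ext (by simpa using h2)
    rw [this, LinearPMap.map_zero]
  rw [hz] at h1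
  simpa using h1.symm

end Stmt13Aux

local notation "⟪" x ", " y "⟫" => @inner ℂ _ _ x y
open LinearPMap

/-- Let `H` be a complex Hilbert space and `t` a densely defined closed operator on `H`.
Then its adjoint `t*` is densely defined, and the operator `t̂` on the Hilbert space
`H ⊕ H` (modelled as `WithLp 2 (H × H)`) with domain `Dom(t) × Dom(t*)` given by
`t̂(x, y) = (t*y, tx)` is selfadjoint, i.e. `t̂` coincides with its adjoint. -/
theorem stmt_13 {H : Type*} [NormedAddCommGroup H] [InnerProductSpace ℂ H] [CompleteSpace H]
    (t : H →ₗ.[ℂ] H) (hdense : Dense (t.domain : Set H))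
    (hclosed : IsClosed (t.graph : Set (H × H))) :
    Dense (t.adjoint.domain : Set H) ∧
    ∀ that : WithLp 2 (H × H) →ₗ.[ℂ] WithLp 2 (H × H),
      that.domain =
        (t.domain.prod t.adjoint.domain).comap (WithLp.linearEquiv 2 ℂ (H × H)).toLinearMap →
      (∀ (p : that.domain) (x : t.domain) (y : t.adjoint.domain),
        WithLp.linearEquiv 2 ℂ (H × H) (↑p : WithLp 2 (H × H)) = ((x : H), (y : H)) →
        WithLp.linearEquiv 2 ℂ (H × H) (that p) = ((t.adjoint y : H), (t x : H))) →
      that.adjoint = that := by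
  refine ⟨adjoint_dense hdense hclosed, ?_⟩
  intro that hdom happ
  have hdense' : Dense (t.adjoint.domain : Set H) := adjoint_dense hdense hclosed
  -- the domain of `that` is dense
  have hthatdense : Dense (that.domain : Set (WithLp 2 (H × H))) := by
    have hset : (that.domain : Set (WithLp 2 (H × H))) =
        (eC (H := H)) ⁻¹' ((t.domain : Set H) ×ˢ (t.adjoint.domain : Set H)) := by
      ext z
      rw [SetLike.mem_coe, hdom, Submodule.mem_comap]
      rw [Set.mem_preimage, Set.mem_prod]
      exact Submodule.mem_prod
    rw [hset]
    exact (hdense.prod hdense').preimage (eC (H := H)).toHomeomorph.isOpenMap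
  -- memberships of domain elements
  have hmemdom : ∀ z : WithLp 2 (H × H), z ∈ that.domain ↔
      z.ofLp.1 ∈ t.domain ∧ z.ofLp.2 ∈ t.adjoint.domain := by
    intro z
    rw [hdom, Submodule.mem_comap]
    exact Submodule.mem_prod
  -- `that` is symmetric
  have hsymm : that.IsFormalAdjoint that := by
    intro p q
    obtain ⟨hp1, hp2⟩ := (hmemdom _).mp p.2
    obtain ⟨hq1, hq2⟩ := (hmemdom _).mp q.2
    set xp : t.domain := ⟨(p : WithLp 2 (H × H)).ofLp.1, hp1⟩
    set yp : t.adjoint.domain := ⟨(p : WithLp 2 (H × H)).ofLp.2, hp2⟩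
    set xq : t.domain := ⟨(q : WithLp 2 (H × H)).ofLp.1, hq1⟩
    set yq : t.adjoint.domain := ⟨(q : WithLp 2 (H × H)).ofLp.2, hq2⟩
    have hP := happ p xp yp rfl
    have hQ := happ q xq yq rfl
    have hP1 : (that p : WithLp 2 (H × H)).ofLp.1 = (t.adjoint yp : H) := congrArg Prod.fst hP
    have hP2 : (that p : WithLp 2 (H × H)).ofLp.2 = (t xp : H) := congrArg Prod.snd hP
    have hQ1 : (that q : WithLp 2 (H × H)).ofLp.1 = (t.adjoint yq : H) := congrArg Prod.fst hQ
    have hQ2 : (that q : WithLp 2 (H × H)).ofLp.2 = (t xq : H) := congrArg Prod.snd hQ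
    rw [WithLp.prod_inner_apply, WithLp.prod_inner_apply, hP1, hP2, hQ1, hQ2]
    have h1 : ⟪(t.adjoint yp : H), ((q : WithLp 2 (H × H)).ofLp.1 : H)⟫ = ⟪(yp : H), t xq⟫ :=
      adjoint_isFormalAdjoint hdense yp xq
    have h2 : ⟪(t xp : H), (q : WithLp 2 (H × H)).ofLp.2⟫ = ⟪((p : WithLp 2 (H × H)).ofLp.1 : H),
        t.adjoint yq⟫ := by
      have ha : ⟪(t.adjoint yq : H), ((p : WithLp 2 (H × H)).ofLp.1 : H)⟫
          = ⟪((q : WithLp 2 (H × H)).ofLp.2 : H), (t xp : H)⟫ :=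
        adjoint_isFormalAdjoint hdense yq xp
      rw [← inner_conj_symm (t xp : H) ((q : WithLp 2 (H × H)).ofLp.2), ← ha, inner_conj_symm]
    rw [h1, h2]
    ring
  have hle1 : that ≤ that.adjoint := LinearPMap.IsFormalAdjoint.le_adjoint hthatdense hsymm
  -- reverse inclusion via graphs
  have hle2 : that.adjoint ≤ that := by
    refine le_of_le_graph ?_
    intro zw hzw
    rw [mem_graph_iff] at hzw
    obtain ⟨z, hz1, hz2⟩ := hzw
    set w : WithLp 2 (H × H) := that.adjoint z with hw
    have hFA := adjoint_isFormalAdjoint hthatdense (T := that)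
    -- claim A : (z.ofLp.2, w.ofLp.1) ∈ t.adjoint.graph
    have claimA : (((z : WithLp 2 (H × H)).ofLp.2 : H), (w.ofLp.1 : H)) ∈ t.adjoint.graph := by
      rw [mem_adjoint_graph_iff hdense]
      intro x
      have hqmem : (eL (H := H)).symm ((x : H), 0) ∈ that.domain := by
        rw [hmemdom]
        exact ⟨x.2, Submodule.zero_mem _⟩
      set q : that.domain := ⟨(eL (H := H)).symm ((x : H), 0), hqmem⟩
      have hq : eL (that q) = ((t.adjoint (0 : t.adjoint.domain) : H), (t x : H)) :=
        happ q x 0 (by rfl)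
      have hq1 : (that q : WithLp 2 (H × H)).ofLp.1 = 0 := by
        have := congrArg Prod.fst hq
        simpa using this
      have hq2 : (that q : WithLp 2 (H × H)).ofLp.2 = (t x : H) := congrArg Prod.snd hq
      have key := hFA z q
      rw [WithLp.prod_inner_apply, WithLp.prod_inner_apply, hq1, hq2] at key
      have hc1 : ((q : WithLp 2 (H × H)).ofLp.1 : H) = (x : H) := rfl
      have hc2 : ((q : WithLp 2 (H × H)).ofLp.2 : H) = 0 := rfl
      rw [hc1, hc2] at key
      simp only [inner_zero_right, add_zero, zero_add] at key
      exact key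
    -- claim B : (z.ofLp.1, w.ofLp.2) ∈ t.graph
    have claimB : (((z : WithLp 2 (H × H)).ofLp.1 : H), (w.ofLp.2 : H)) ∈ t.graph := by
      have hGrt : ((Gr t.adjoint).map (VL (H := H)))ᗮ = Gr t := by
        rw [map_Gr_adjoint_eq hdense]
        haveI : CompleteSpace (Gr t) := (isClosed_Gr hclosed).completeSpace_coe
        exact Submodule.orthogonal_orthogonal _
      have hmem : (eL (H := H)).symm ((z : WithLp 2 (H × H)).ofLp.1, w.ofLp.2) ∈
          ((Gr t.adjoint).map (VL (H := H)))ᗮ := by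
        rw [Submodule.mem_orthogonal]
        intro g hg
        obtain ⟨g0, hg0, rfl⟩ := Submodule.mem_map.mp hg
        rw [mem_Gr] at hg0
        have hy : g0.ofLp.1 ∈ t.adjoint.domain := mem_domain_of_mem_graph hg0
        have hyval : t.adjoint ⟨g0.ofLp.1, hy⟩ = g0.ofLp.2 := apply_of_mem_graph hg0 hy
        set y : t.adjoint.domain := ⟨g0.ofLp.1, hy⟩
        have hqmem : (eL (H := H)).symm (0, (y : H)) ∈ that.domain := by
          rw [hmemdom]
          exact ⟨Submodule.zero_mem _, y.2⟩
        set q : that.domain := ⟨(eL (H := H)).symm (0, (y : H)), hqmem⟩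
        have hq : eL (that q) = ((t.adjoint y : H), (t (0 : t.domain) : H)) :=
          happ q 0 y (by rfl)
        have hq1 : (that q : WithLp 2 (H × H)).ofLp.1 = (t.adjoint y : H) := congrArg Prod.fst hq
        have hq2 : (that q : WithLp 2 (H × H)).ofLp.2 = 0 := by
          have := congrArg Prod.snd hq
          simpa using this
        have key := hFA z q
        rw [WithLp.prod_inner_apply, WithLp.prod_inner_apply, hq1, hq2] at key
        have hc1 : ((q : WithLp 2 (H × H)).ofLp.1 : H) = 0 := rfl
        have hc2 : ((q : WithLp 2 (H × H)).ofLp.2 : H) = (y : H) := rfl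
        rw [hc1, hc2] at key
        simp only [inner_zero_right, add_zero, zero_add] at key
        -- key : ⟪w.ofLp.2, y⟫ = ⟪z.ofLp.1, t† y⟫
        rw [WithLp.prod_inner_apply, VL_fst, VL_snd, eL_symm_fst, eL_symm_snd, inner_neg_left]
        rw [← hyval] at *
        have h3 : ⟪g0.ofLp.1, (w.ofLp.2 : H)⟫ = ⟪(t.adjoint y : H), (z : WithLp 2 (H × H)).ofLp.1⟫ := by
          rw [← inner_conj_symm g0.ofLp.1 (w.ofLp.2 : H)]
          have hc3 : ⟪(w.ofLp.2 : H), g0.ofLp.1⟫ = ⟪(w.ofLp.2 : H), (y : H)⟫ := rfl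
          rw [hc3, key, inner_conj_symm]
        rw [h3]
        ring
      rw [hGrt, mem_Gr] at hmem
      have e1 : ((eL (H := H)).symm ((z : WithLp 2 (H × H)).ofLp.1, w.ofLp.2) :
          WithLp 2 (H × H)).ofLp.1 = (z : WithLp 2 (H × H)).ofLp.1 := rfl
      have e2 : ((eL (H := H)).symm ((z : WithLp 2 (H × H)).ofLp.1, w.ofLp.2) :
          WithLp 2 (H × H)).ofLp.2 = w.ofLp.2 := rfl
      rwa [e1, e2] at hmem
    -- conclude
    have hu : (z : WithLp 2 (H × H)).ofLp.1 ∈ t.domain := mem_domain_of_mem_graph claimB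
    have hv : (z : WithLp 2 (H × H)).ofLp.2 ∈ t.adjoint.domain := mem_domain_of_mem_graph claimA
    have hzmem : (z : WithLp 2 (H × H)) ∈ that.domain := (hmemdom _).mpr ⟨hu, hv⟩
    set zq : that.domain := ⟨(z : WithLp 2 (H × H)), hzmem⟩
    have hval : eL (that zq) = ((t.adjoint ⟨_, hv⟩ : H), (t ⟨_, hu⟩ : H)) :=
      happ zq ⟨_, hu⟩ ⟨_, hv⟩ rfl
    have hta : t.adjoint ⟨_, hv⟩ = w.ofLp.1 := apply_of_mem_graph claimA hv
    have htb : t ⟨_, hu⟩ = w.ofLp.2 := apply_of_mem_graph claimB hu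
    have hthatzq : that zq = w := by
      apply (eL (H := H)).injective
      rw [hval, hta, htb]
      exact (Prod.mk.eta).symm ▸ rfl
    rw [mem_graph_iff]
    exact ⟨zq, hz1, hthatzq.trans hz2⟩
  exact le_antisymm hle2 hle1
end

section
/- Let H be an infinite-dimensional complex Hilbert space. Then the gap metric on the bounded linear operators on H is not complete: there exists a sequence (Tₙ) of bounded operators on H such that the sequence of graph projections (P_{G(Tₙ)}) is Cauchy in operator norm, but there is no bounded operator T on H with ‖P_{G(Tₙ)} − P_{G(T)}‖ → 0. -/
section Aux

set_option linter.unusedSectionVars false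

open ContinuousLinearMap in
/-- The operator on `WithLp 2 (H × H)` given by the `2 × 2` operator matrix
`[[α, β], [γ, δ]]` (scalar entries). -/
noncomputable def opM {H : Type*} [NormedAddCommGroup H] [InnerProductSpace ℂ H]
    (α β γ δ : ℂ) : WithLp 2 (H × H) →L[ℂ] WithLp 2 (H × H) :=
  ((WithLp.prodContinuousLinearEquiv 2 ℂ H H).symm.toContinuousLinearMap) ∘L
    ((α • fst ℂ H H + β • snd ℂ H H).prod (γ • fst ℂ H H + δ • snd ℂ H H)) ∘L
    (WithLp.prodContinuousLinearEquiv 2 ℂ H H).toContinuousLinearMap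

variable {H : Type*} [NormedAddCommGroup H] [InnerProductSpace ℂ H] [CompleteSpace H]

lemma opM_apply_fst (α β γ δ : ℂ) (x : WithLp 2 (H × H)) :
    (opM α β γ δ x).fst = α • x.fst + β • x.snd := rfl

lemma opM_apply_snd (α β γ δ : ℂ) (x : WithLp 2 (H × H)) :
    (opM α β γ δ x).snd = γ • x.fst + δ • x.snd := rfl

lemma opM_isSelfAdjoint (a b d : ℝ) : IsSelfAdjoint (opM (H := H) a b b d) := by
  rw [ContinuousLinearMap.isSelfAdjoint_iff_isSymmetric]
  intro x y
  show (inner ℂ (opM (H := H) (a:ℂ) b b d x) y : ℂ) = inner ℂ x (opM (H := H) (a:ℂ) b b d y)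
  simp only [WithLp.prod_inner_apply, WithLp.ofLp_fst, WithLp.ofLp_snd, opM_apply_fst, opM_apply_snd, inner_add_left,
    inner_add_right, inner_smul_left, inner_smul_right, Complex.conj_ofReal]
  ring

lemma opM_mul (α β γ δ α' β' γ' δ' : ℂ) :
    opM (H := H) α β γ δ * opM α' β' γ' δ' =
      opM (α*α'+β*γ') (α*β'+β*δ') (γ*α'+δ*γ') (γ*β'+δ*δ') := by
  refine ContinuousLinearMap.ext fun x => (WithLp.ext_iff 2).2 (Prod.ext ?_ ?_) <;>
    simp [ContinuousLinearMap.mul_apply, opM_apply_fst, opM_apply_snd, smul_add,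
      smul_smul, add_smul] <;> abel

lemma opM_sub (α β γ δ α' β' γ' δ' : ℂ) :
    opM (H := H) α β γ δ - opM α' β' γ' δ' = opM (α-α') (β-β') (γ-γ') (δ-δ') := by
  refine ContinuousLinearMap.ext fun x => (WithLp.ext_iff 2).2 (Prod.ext ?_ ?_) <;>
    simp [opM_apply_fst, opM_apply_snd, sub_smul] <;> abel

lemma prod_norm_fst_le (x : WithLp 2 (H × H)) : ‖x.fst‖ ≤ ‖x‖ := by
  have h := WithLp.prod_norm_sq_eq_of_L2 x
  nlinarith [norm_nonneg x, norm_nonneg x.fst, norm_nonneg x.snd]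

lemma prod_norm_snd_le (x : WithLp 2 (H × H)) : ‖x.snd‖ ≤ ‖x‖ := by
  have h := WithLp.prod_norm_sq_eq_of_L2 x
  nlinarith [norm_nonneg x, norm_nonneg x.fst, norm_nonneg x.snd]

lemma prod_norm_le_add (x : WithLp 2 (H × H)) : ‖x‖ ≤ ‖x.fst‖ + ‖x.snd‖ := by
  have h := WithLp.prod_norm_sq_eq_of_L2 x
  nlinarith [norm_nonneg x, norm_nonneg x.fst, norm_nonneg x.snd]

lemma opM_norm_le (α β γ δ : ℂ) :
    ‖opM (H := H) α β γ δ‖ ≤ ‖α‖ + ‖β‖ + ‖γ‖ + ‖δ‖ := by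
  refine ContinuousLinearMap.opNorm_le_bound _ (by positivity) fun x => ?_
  calc ‖opM (H := H) α β γ δ x‖ ≤ ‖(opM (H := H) α β γ δ x).fst‖ + ‖(opM (H := H) α β γ δ x).snd‖ :=
        prod_norm_le_add _
    _ ≤ (‖α‖ * ‖x.fst‖ + ‖β‖ * ‖x.snd‖) + (‖γ‖ * ‖x.fst‖ + ‖δ‖ * ‖x.snd‖) := by
        rw [opM_apply_fst, opM_apply_snd]
        gcongr <;> [skip; skip] <;>
          exact (norm_add_le _ _).trans (by rw [norm_smul, norm_smul])
    _ ≤ (‖α‖ + ‖β‖ + ‖γ‖ + ‖δ‖) * ‖x‖ := by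
        have h1 := prod_norm_fst_le x; have h2 := prod_norm_snd_le x
        have h0 := norm_nonneg x
        nlinarith [norm_nonneg α, norm_nonneg β, norm_nonneg γ, norm_nonneg δ]

lemma mem_boundedGraph_iff (T : H →L[ℂ] H) (p : WithLp 2 (H × H)) :
    p ∈ boundedGraph T ↔ T p.fst = p.snd := by
  rw [boundedGraph, Submodule.mem_comap, LinearMap.mem_graph_iff]
  exact eq_comm

lemma isIdem_P (c : ℝ) :
    IsIdempotentElem (opM (H := H) ((1+c^2)⁻¹ : ℝ) (((1+c^2)⁻¹*c : ℝ)) (((1+c^2)⁻¹*c : ℝ))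
      (((1+c^2)⁻¹*c^2 : ℝ))) := by
  have h0 : (1:ℝ)+c^2 ≠ 0 := by positivity
  rw [IsIdempotentElem, opM_mul]
  congr 1 <;> norm_cast <;> field_simp <;> ring_nf <;> tauto

lemma range_P (c : ℝ) :
    LinearMap.range (opM (H := H) ((1+c^2)⁻¹ : ℝ) (((1+c^2)⁻¹*c : ℝ)) (((1+c^2)⁻¹*c : ℝ))
      (((1+c^2)⁻¹*c^2 : ℝ)) : WithLp 2 (H × H) →ₗ[ℂ] WithLp 2 (H × H)) = boundedGraph ((c:ℂ) • (1 : H →L[ℂ] H)) := by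
  have h0 : (1:ℝ)+c^2 ≠ 0 := by positivity
  have h0c : ((1:ℂ)+(c:ℂ)^2) ≠ 0 := by exact_mod_cast h0
  apply le_antisymm
  · rintro p ⟨x, rfl⟩
    rw [mem_boundedGraph_iff]
    simp only [ContinuousLinearMap.smul_apply, ContinuousLinearMap.one_apply]
    rw [ContinuousLinearMap.coe_coe, opM_apply_fst, opM_apply_snd, smul_add, smul_smul, smul_smul]
    congr 1 <;> congr 1 <;> push_cast <;> ring
  · intro p hp
    rw [mem_boundedGraph_iff] at hp
    simp only [ContinuousLinearMap.smul_apply, ContinuousLinearMap.one_apply] at hp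
    refine ⟨p, (WithLp.ext_iff 2).2 (Prod.ext ?_ ?_)⟩ <;> simp only [WithLp.ofLp_fst, WithLp.ofLp_snd]
    · rw [ContinuousLinearMap.coe_coe, opM_apply_fst, ← hp, smul_smul, ← add_smul]
      rw [show ((((1+c^2)⁻¹ : ℝ):ℂ) + (((1+c^2)⁻¹*c : ℝ):ℂ) * c) = 1 from by
        push_cast; field_simp [h0c], one_smul]
    · rw [ContinuousLinearMap.coe_coe, opM_apply_snd, ← hp, smul_smul, ← add_smul]
      congr 1
      push_cast; field_simp [h0c]

/-- The sequence of graph projections of `Tₙ = n • 1`. -/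
noncomputable def Pseq (H : Type*) [NormedAddCommGroup H] [InnerProductSpace ℂ H] (n : ℕ) :
    WithLp 2 (H × H) →L[ℂ] WithLp 2 (H × H) :=
  opM ((1+(n:ℝ)^2)⁻¹ : ℝ) (((1+(n:ℝ)^2)⁻¹*(n:ℝ) : ℝ)) (((1+(n:ℝ)^2)⁻¹*(n:ℝ) : ℝ))
    (((1+(n:ℝ)^2)⁻¹*(n:ℝ)^2 : ℝ))

/-- The limit projection, onto the "vertical" subspace `0 × H`. -/
noncomputable def Pinf (H : Type*) [NormedAddCommGroup H] [InnerProductSpace ℂ H] :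
    WithLp 2 (H × H) →L[ℂ] WithLp 2 (H × H) := opM 0 0 0 1

lemma norm_Pseq_sub_Pinf_le (n : ℕ) : ‖Pseq H n - Pinf H‖ ≤ 4 / ((n:ℝ)+1) := by
  set c : ℝ := (n:ℝ) with hc
  have hc0 : 0 ≤ c := Nat.cast_nonneg n
  have h0 : (0:ℝ) < 1+c^2 := by positivity
  set a : ℝ := (1+c^2)⁻¹ with ha
  have ha0 : 0 ≤ a := by positivity
  have haa : a*(1+c^2) = 1 := inv_mul_cancel₀ (ne_of_gt h0)
  rw [Pseq, Pinf, opM_sub]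
  refine (opM_norm_le _ _ _ _).trans ?_
  have e1 : ((a:ℂ) - 0) = ((a:ℝ) : ℂ) := by ring
  have e2 : (((a*c : ℝ):ℂ) - 0) = ((a*c : ℝ) : ℂ) := by ring
  have e3 : (((a*c^2 : ℝ):ℂ) - 1) = ((a*c^2 - 1 : ℝ) : ℂ) := by push_cast; ring
  rw [e1, e2, e3]
  have h4 : a*c^2 - 1 = -a := by rw [ha]; field_simp; ring
  simp only [Complex.norm_real, Real.norm_eq_abs]
  rw [h4, abs_neg, abs_of_nonneg ha0, abs_of_nonneg (mul_nonneg ha0 hc0)]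
  rw [le_div_iff₀ (by positivity : (0:ℝ) < (n:ℝ)+1), ← hc]
  nlinarith [haa, mul_nonneg ha0 (sq_nonneg (c-1))]

lemma tendsto_Pseq : Filter.Tendsto (fun n => ‖Pseq H n - Pinf H‖)
    Filter.atTop (nhds 0) := by
  have h4 : Filter.Tendsto (fun n : ℕ => 4 / ((n:ℝ)+1)) Filter.atTop (nhds 0) := by
    simpa [div_eq_mul_inv] using (tendsto_one_div_add_atTop_nhds_zero_nat (𝕜 := ℝ)).const_mul 4
  exact squeeze_zero (fun n => norm_nonneg _) (fun n => norm_Pseq_sub_Pinf_le n) h4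

end Aux

/-- Let `H` be an infinite-dimensional complex Hilbert space. Then the gap metric on the
bounded operators on `H` is not complete: there is a sequence `(Tₙ)` of bounded operators
whose graph projections `(P_{G(Tₙ)})` form a Cauchy sequence in operator norm, but no
bounded operator `T` satisfies `‖P_{G(Tₙ)} − P_{G(T)}‖ → 0`. -/
theorem stmt_16 {H : Type*} [NormedAddCommGroup H] [InnerProductSpace ℂ H] [CompleteSpace H]
    (hinf : ¬ FiniteDimensional ℂ H) :
    ∃ (T : ℕ → H →L[ℂ] H) (P : ℕ → (WithLp 2 (H × H) →L[ℂ] WithLp 2 (H × H))),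
      (∀ n, IsOrthogonalProjectionOnto (P n) (boundedGraph (T n))) ∧
      CauchySeq P ∧
      ∀ (S : H →L[ℂ] H) (Q : WithLp 2 (H × H) →L[ℂ] WithLp 2 (H × H)),
        IsOrthogonalProjectionOnto Q (boundedGraph S) →
        ¬ Filter.Tendsto (fun n => ‖P n - Q‖) Filter.atTop (nhds 0) := by
  have htend : Filter.Tendsto (Pseq H) Filter.atTop (nhds (Pinf H)) := by
    rw [tendsto_iff_norm_sub_tendsto_zero]
    exact tendsto_Pseq
  refine ⟨fun n => (((n:ℝ):ℂ)) • 1, Pseq H,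
    fun n => ⟨opM_isSelfAdjoint _ _ _, isIdem_P _, range_P _⟩,
    htend.cauchySeq, ?_⟩
  rintro S Q ⟨-, -, hQrange⟩ htends
  -- `Q` must equal `Pinf H`
  have h1 : Filter.Tendsto (fun n => ‖Pseq H n - Pinf H‖ + ‖Pseq H n - Q‖)
      Filter.atTop (nhds 0) := by
    have := tendsto_Pseq (H := H) |>.add htends
    rwa [add_zero] at this
  have h2 : ‖Pinf H - Q‖ ≤ 0 := by
    refine ge_of_tendsto h1 (Filter.Eventually.of_forall fun n => ?_)
    calc ‖Pinf H - Q‖ ≤ ‖Pinf H - Pseq H n‖ + ‖Pseq H n - Q‖ :=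
          norm_sub_le_norm_sub_add_norm_sub _ _ _
      _ = ‖Pseq H n - Pinf H‖ + ‖Pseq H n - Q‖ := by rw [norm_sub_rev]
  have hQP : Q = Pinf H := by
    have := le_antisymm h2 (norm_nonneg _)
    rw [norm_sub_eq_zero_iff] at this
    exact this.symm
  -- but `Pinf H` has range `0 × H`, which is not a graph since `H` is nontrivial
  have hnt : Nontrivial H := by
    rcases subsingleton_or_nontrivial H with hs | hn
    · haveI := hs
      exact absurd (inferInstance : FiniteDimensional ℂ H) hinf
    · exact hn
  obtain ⟨x, hx⟩ := exists_ne (0 : H)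
  have hp : (WithLp.equiv 2 (H × H)).symm (x, S x) ∈ boundedGraph S := by
    rw [mem_boundedGraph_iff]; rfl
  rw [← hQrange, hQP] at hp
  obtain ⟨w, hw⟩ := hp
  have hfst := congrArg WithLp.fst hw
  rw [Pinf, ContinuousLinearMap.coe_coe, opM_apply_fst] at hfst
  simp only [zero_smul, add_zero] at hfst
  exact hx (by simpa using hfst.symm)
end
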